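/- arXiv:1604.06499 — 6 statements merged into one kernel-verified Lean document; each statement's English description precedes it below -/
import Mathlib

section
/- Let Π be a plane through the origin in ℝ³ and let L be a full-rank lattice in ℝ³ invariant under the reflection in Π. Set L₀ := L ∩ Π. Then L₀ is a rank-2 lattice spanning Π, and if w is any point of L ∖ L₀ whose distance to Π is minimal among all points of L ∖ L₀, then L = ⋃_{k∈ℤ} (L₀ + kw); that is, every element of L can be written as v + kw with v ∈ L₀ and k ∈ ℤ. -/
noncomputable section

/-- Euclidean 3-space. -/
abbrev E3 := EuclideanSpace ℝ (Fin 3)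

/-- A full-rank lattice in `ℝ³`. -/
def IsFullLattice (L : AddSubgroup E3) : Prop :=
  ∃ b : Module.Basis (Fin 3) ℝ E3,
    ∀ x, x ∈ L ↔ ∃ c : Fin 3 → ℤ, x = ∑ i, (c i : ℝ) • b i

set_option maxHeartbeats 1000000 in
/-- Let `Π` be a plane through the origin and `L` a full-rank lattice
invariant under the reflection in `Π`, and set `L₀ := L ∩ Π`.  Then `L₀` is a rank-2
lattice spanning `Π`, and if `w ∈ L ∖ L₀` has minimal distance to `Π` among points of
`L ∖ L₀`, then every element of `L` has the form `v + k • w` with `v ∈ L₀`, `k ∈ ℤ`. -/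
theorem statement3 (P : Submodule ℝ E3) (hP : Module.finrank ℝ P = 2)
    (R : E3 ≃ₗᵢ[ℝ] E3)
    (hR₁ : ∀ x ∈ P, R x = x) (hR₂ : ∀ x ∈ Pᗮ, R x = -x)
    (L : AddSubgroup E3) (hL : IsFullLattice L)
    (hinv : R '' (L : Set E3) = (L : Set E3)) :
    (∃ w₁ w₂ : E3, w₁ ∈ P ∧ w₂ ∈ P ∧ LinearIndependent ℝ ![w₁, w₂] ∧
        Submodule.span ℝ {w₁, w₂} = P ∧
        (∀ x : E3, (x ∈ L ∧ x ∈ P) ↔ ∃ m n : ℤ, x = m • w₁ + n • w₂)) ∧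
    (∀ w : E3, w ∈ L → w ∉ P →
      (∀ y : E3, y ∈ L → y ∉ P →
        Metric.infDist w (P : Set E3) ≤ Metric.infDist y (P : Set E3)) →
      ∀ x ∈ L, ∃ (v : E3) (k : ℤ), (v ∈ L ∧ v ∈ P) ∧ x = v + k • w) := by
  obtain ⟨b, hb⟩ := hL
  have hzsmulP : ∀ (k : ℤ) (z : E3), z ∈ P → k • z ∈ P := fun k z hz => by
    rw [← Int.cast_smul_eq_zsmul ℝ]; exact P.smul_mem _ hz
  -- `L` coincides with the `ℤ`-span of `b`
  set S : Submodule ℤ E3 := Submodule.span ℤ (Set.range b) with hS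
  have hLS : ∀ x : E3, x ∈ L ↔ x ∈ S := by
    intro x
    rw [hb, hS, Submodule.mem_span_range_iff_exists_fun]
    constructor
    · rintro ⟨c, rfl⟩
      exact ⟨c, by simp_rw [Int.cast_smul_eq_zsmul ℝ]⟩
    · rintro ⟨c, rfl⟩
      exact ⟨c, by simp_rw [Int.cast_smul_eq_zsmul ℝ]⟩
  -- `R` maps `L` into `L`
  have hRL : ∀ x ∈ L, R x ∈ L := fun x hx => by
    have : R x ∈ R '' (L : Set E3) := ⟨x, hx, rfl⟩
    rwa [hinv] at this
  -- reflection formula : x + R x = 2 • proj x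
  have hproj : ∀ x : E3, x + R x = (2 : ℝ) • ((P.orthogonalProjectionOnto x : P) : E3) := by
    intro x
    have h1 : ((P.orthogonalProjectionOnto x : P) : E3) ∈ P := (P.orthogonalProjectionOnto x).2
    have h2 : x - ((P.orthogonalProjectionOnto x : P) : E3) ∈ Pᗮ :=
      Submodule.sub_starProjection_mem_orthogonal x
    have h3 := hR₂ _ h2
    rw [map_sub, hR₁ _ h1, sub_eq_iff_eq_add] at h3
    rw [h3, two_smul]
    abel
  -- the rank 2 sublattice
  set M : Submodule ℤ P := Submodule.comap ((P.subtype).restrictScalars ℤ) S with hM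
  have hMmem : ∀ y : P, y ∈ M ↔ (y : E3) ∈ L := fun y => (hLS _).symm
  haveI : DiscreteTopology M := by
    refine DiscreteTopology.of_continuous_injective
      (f := fun x : M => (⟨(x : P), x.2⟩ : S)) ?_ ?_
    · exact Continuous.subtype_mk (continuous_subtype_val.comp continuous_subtype_val) _
    · intro x y hxy
      simp only [Subtype.mk.injEq] at hxy
      exact Subtype.ext (Subtype.ext (congrArg (fun z : S => (z : E3)) hxy))
  -- doubled projections of lattice vectors are in M
  have hdouble : ∀ x ∈ L, ((2 : ℤ) • P.orthogonalProjectionOnto x : P) ∈ M := by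
    intro x hx
    rw [hMmem]
    have h4 : (((2 : ℤ) • P.orthogonalProjectionOnto x : P) : E3) = x + R x := by
      rw [hproj x, ← Int.cast_smul_eq_zsmul ℝ]
      norm_num
    rw [h4]
    exact L.add_mem hx (hRL x hx)
  haveI : IsZLattice ℝ M := by
    constructor
    rw [eq_top_iff]
    rintro p -
    have hgen : ∀ i, (P.orthogonalProjectionOnto (b i) : P) ∈ Submodule.span ℝ (M : Set P) := by
      intro i
      have hbL : b i ∈ L := (hLS _).mpr (Submodule.subset_span (Set.mem_range_self i))
      have h2 := Submodule.smul_mem (Submodule.span ℝ (M : Set P)) ((2 : ℝ)⁻¹)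
        (Submodule.subset_span (hdouble _ hbL))
      have h3 : ((2:ℝ)⁻¹) • ((2 : ℤ) • P.orthogonalProjectionOnto (b i) : P)
          = P.orthogonalProjectionOnto (b i) := by
        rw [← Int.cast_smul_eq_zsmul ℝ, smul_smul]
        norm_num
      rwa [h3] at h2
    have hrepr : p = ∑ i, (b.repr (p : E3) i) • (P.orthogonalProjectionOnto (b i)) := by
      conv_lhs => rw [← Submodule.orthogonalProjectionOnto_mem_subspace_eq_self p]
      conv_lhs => rw [← b.sum_repr (p : E3)]
      rw [map_sum]
      simp_rw [map_smul]
    rw [hrepr]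
    exact Submodule.sum_mem _ (fun i _ => Submodule.smul_mem _ _ (hgen i))
  haveI := ZLattice.module_finite ℝ M
  haveI := ZLattice.module_free ℝ M
  have hrank : Module.finrank ℤ M = 2 := by rw [ZLattice.rank ℝ M, hP]
  have hcard : Fintype.card (Module.Free.ChooseBasisIndex ℤ M) = 2 := by
    rw [← Module.finrank_eq_card_chooseBasisIndex, hrank]
  set e : Module.Basis (Fin 2) ℤ M :=
    (Module.Free.chooseBasis ℤ M).reindex (Fintype.equivFinOfCardEq hcard) with he
  set eR : Module.Basis (Fin 2) ℝ P := Module.Basis.ofZLatticeBasis ℝ M e with heR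
  set w₁ : E3 := (((e 0 : M) : P) : E3) with hw₁
  set w₂ : E3 := (((e 1 : M) : P) : E3) with hw₂
  have hmat : ![w₁, w₂] = (P.subtype) ∘ eR := by
    funext i
    fin_cases i
    · show w₁ = ((eR 0 : P) : E3)
      rw [heR, Module.Basis.ofZLatticeBasis_apply]
    · show w₂ = ((eR 1 : P) : E3)
      rw [heR, Module.Basis.ofZLatticeBasis_apply]
  constructor
  · refine ⟨w₁, w₂, ((e 0 : M) : P).2, ((e 1 : M) : P).2, ?_, ?_, ?_⟩
    · rw [hmat]
      exact eR.linearIndependent.map' P.subtype (Submodule.ker_subtype P)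
    · have hr : ({w₁, w₂} : Set E3) = P.subtype '' (Set.range eR) := by
        rw [← Set.range_comp, ← hmat]
        ext x
        simp [Fin.exists_fin_two]
        tauto
      rw [hr, ← Submodule.map_span, eR.span_eq, Submodule.map_top, Submodule.range_subtype]
    · intro x
      constructor
      · rintro ⟨hxL, hxP⟩
        have hxM : (⟨x, hxP⟩ : P) ∈ M := (hMmem ⟨x, hxP⟩).mpr hxL
        set y : M := ⟨⟨x, hxP⟩, hxM⟩ with hy
        refine ⟨e.repr y 0, e.repr y 1, ?_⟩
        have h := e.sum_repr y
        have h2 : x = ((y : P) : E3) := rfl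
        rw [h2]
        conv_lhs => rw [← h]
        rw [Fin.sum_univ_two]
        simp only [Submodule.coe_add, Submodule.coe_smul, AddSubgroupClass.coe_zsmul]
        rfl
      · rintro ⟨m, n, rfl⟩
        have h1 : w₁ ∈ L := (hMmem _).mp (e 0).2
        have h2 : w₂ ∈ L := (hMmem _).mp (e 1).2
        refine ⟨L.add_mem (L.zsmul_mem h1 m) (L.zsmul_mem h2 n), ?_⟩
        exact P.add_mem (hzsmulP m _ ((e 0 : M) : P).2) (hzsmulP n _ ((e 1 : M) : P).2)
  · -- Part 2
    intro w hwL hwP hmin x hxL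
    -- a unit normal vector to P
    obtain ⟨u, hu, hPu⟩ : ∃ u : E3, ‖u‖ = 1 ∧ Pᗮ = Submodule.span ℝ {u} := by
      have h1 : Module.finrank ℝ Pᗮ = 1 := by
        have h2 := Submodule.finrank_add_finrank_orthogonal (K := P)
        rw [hP] at h2
        simp [finrank_euclideanSpace] at h2
        omega
      obtain ⟨v, hv0, hv⟩ := finrank_eq_one_iff'.mp h1
      have hspan : Pᗮ = Submodule.span ℝ {(v : E3)} := by
        apply le_antisymm
        · intro y hy
          obtain ⟨c, hc⟩ := hv ⟨y, hy⟩
          rw [Submodule.mem_span_singleton]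
          exact ⟨c, congrArg Subtype.val hc⟩
        · rw [Submodule.span_singleton_le_iff_mem]; exact v.2
      have hvne : (v : E3) ≠ 0 := fun h => hv0 (Subtype.ext h)
      refine ⟨‖(v : E3)‖⁻¹ • (v : E3), norm_smul_inv_norm hvne, ?_⟩
      rw [Submodule.span_singleton_smul_eq
        (IsUnit.mk0 _ (inv_ne_zero (norm_ne_zero_iff.mpr hvne))) _]
      exact hspan
    have hu' : u ∈ Pᗮ := by rw [hPu]; exact Submodule.mem_span_singleton_self u
    -- membership in P is vanishing of the inner product with u
    have hPiff : ∀ z : E3, z ∈ P ↔ (inner ℝ u z : ℝ) = 0 := by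
      intro z
      constructor
      · intro hz
        rw [real_inner_comm]
        exact hu' z hz
      · intro hz
        rw [← Submodule.orthogonal_orthogonal P, Submodule.mem_orthogonal]
        intro y hy
        rw [hPu, Submodule.mem_span_singleton] at hy
        obtain ⟨c, rfl⟩ := hy
        rw [real_inner_smul_left, hz, mul_zero]
    -- the distance to P is the absolute value of the inner product with u
    have hdist : ∀ z : E3, Metric.infDist z (P : Set E3) = |(inner ℝ u z : ℝ)| := by
      intro z
      have hfP : ∀ p ∈ P, (inner ℝ u p : ℝ) = 0 := fun p hp => (hPiff p).mp hp
      have hge : ∀ p ∈ P, |(inner ℝ u z : ℝ)| ≤ dist z p := by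
        intro p hp
        calc |(inner ℝ u z : ℝ)| = |(inner ℝ u (z - p) : ℝ)| := by
              rw [inner_sub_right, hfP p hp, sub_zero]
          _ ≤ ‖u‖ * ‖z - p‖ := abs_real_inner_le_norm u (z - p)
          _ = dist z p := by rw [hu, one_mul, dist_eq_norm]
      apply le_antisymm
      · refine (Metric.infDist_le_dist_of_mem (y := z - (inner ℝ u z : ℝ) • u) ?_).trans_eq ?_
        · rw [SetLike.mem_coe, hPiff, inner_sub_right, inner_smul_right, real_inner_self_eq_norm_sq, hu]
          ring
        · rw [dist_eq_norm, show z - (z - (inner ℝ u z : ℝ) • u) = (inner ℝ u z : ℝ) • u by abel]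
          rw [norm_smul, hu, mul_one, Real.norm_eq_abs]
      · by_contra h
        push_neg at h
        obtain ⟨p, hp, hlt⟩ := (Metric.infDist_lt_iff ⟨0, P.zero_mem⟩).mp h
        exact absurd (hge p hp) (not_le.mpr hlt)
    set a : ℝ := (inner ℝ u w : ℝ) with ha'
    have ha : a ≠ 0 := fun h => hwP ((hPiff w).mpr h)
    set k : ℤ := round ((inner ℝ u x : ℝ) / a) with hk
    refine ⟨x - k • w, k, ⟨L.sub_mem hxL (L.zsmul_mem hwL k), ?_⟩, by abel⟩
    by_contra hvP
    have h1 : |a| ≤ |(inner ℝ u (x - k • w) : ℝ)| := by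
      have h2 := hmin (x - k • w) (L.sub_mem hxL (L.zsmul_mem hwL k)) hvP
      rwa [hdist, hdist] at h2
    have h3 : (inner ℝ u ((k : ℤ) • w) : ℝ) = (k : ℝ) * a := by
      rw [← Int.cast_smul_eq_zsmul ℝ, real_inner_smul_right]
    have h4 : |(inner ℝ u (x - k • w) : ℝ)| ≤ |a| / 2 := by
      rw [inner_sub_right, h3]
      have h5 := abs_sub_round ((inner ℝ u x : ℝ) / a)
      calc |(inner ℝ u x : ℝ) - (k : ℝ) * a|
          = |a| * |(inner ℝ u x : ℝ) / a - (k : ℝ)| := by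
            rw [← abs_mul]
            congr 1
            field_simp
          _ ≤ |a| * (1/2) := by
            apply mul_le_mul_of_nonneg_left _ (abs_nonneg a)
            exact h5
          _ = |a| / 2 := by ring
    have h6 : 0 < |a| := abs_pos.mpr ha
    linarith

end
end

section
/- Let Π be a plane through the origin in ℝ³, let L be a full-rank lattice in ℝ³ invariant under the reflection in Π, and set L₀ := L ∩ Π. Then for any basis {v₁, v₂} of the rank-2 lattice L₀, there exists w ∈ L ∖ L₀ of minimal distance to Π among points of L ∖ L₀ whose orthogonal projection onto Π lies in the set {0, v₁/2, v₂/2, (v₁+v₂)/2} and which satisfies L = ⋃_{k∈ℤ}(L₀ + kw). Moreover, L is a vertical translation lattice with respect to Π if and only if such a w can be chosen with orthogonal projection 0. -/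
noncomputable section

/-- `L` is a vertical translation lattice with respect to the plane `P`:
`L = L₀ + ℤ w'` for some vector `w'` orthogonal to `P`, where `L₀ = L ∩ P`. -/
def IsVerticalLattice (P : Submodule ℝ E3) (L : AddSubgroup E3) : Prop :=
  ∃ w' : E3, w' ∈ Pᗮ ∧
    ∀ x : E3, x ∈ L ↔ ∃ (v : E3) (k : ℤ), (v ∈ L ∧ v ∈ P) ∧ x = v + k • w'

open RealInnerProductSpace Metric

open RealInnerProductSpace Metric in
lemma exists_lattice_min (L : AddSubgroup E3) (hL : IsFullLattice L) :
    ∃ ε > 0, ∀ x ∈ L, x ≠ 0 → ε ≤ ‖x‖ := by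
  obtain ⟨b, hb⟩ := hL
  set T : E3 →L[ℝ] (Fin 3 → ℝ) :=
    LinearMap.toContinuousLinearMap (b.equivFun : E3 →ₗ[ℝ] (Fin 3 → ℝ)) with hT
  refine ⟨1/(‖T‖+1), by positivity, ?_⟩
  intro x hx hx0
  obtain ⟨c, rfl⟩ := (hb x).1 hx
  have hci : ∃ i, c i ≠ 0 := by
    by_contra h
    push_neg at h
    exact hx0 (by simp [h])
  obtain ⟨i, hi⟩ := hci
  have h1 : (1:ℝ) ≤ |(c i : ℝ)| := by exact_mod_cast Int.one_le_abs hi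
  have hsum : (∑ j, (c j:ℝ) • b j) = b.equivFun.symm (fun j => (c j:ℝ)) := by
    rw [Module.Basis.equivFun_symm_apply]
  have hrepr : T (∑ j, (c j:ℝ) • b j) i = (c i : ℝ) := by
    rw [hsum]
    show (b.equivFun : E3 →ₗ[ℝ] (Fin 3 → ℝ)) (b.equivFun.symm fun j => (c j:ℝ)) i = _
    simp [Finsupp.single_apply]
  have h2 : |(c i : ℝ)| ≤ ‖T (∑ j, (c j:ℝ) • b j)‖ := by
    calc |(c i:ℝ)| = ‖T (∑ j, (c j:ℝ) • b j) i‖ := by rw [hrepr]; rfl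
      _ ≤ _ := norm_le_pi_norm _ i
  have h3 := T.le_opNorm (∑ j, (c j:ℝ) • b j)
  have h4 : (1:ℝ) ≤ (‖T‖+1) * ‖∑ j, (c j:ℝ) • b j‖ := by
    nlinarith [norm_nonneg (∑ j, (c j:ℝ) • b j), norm_nonneg T]
  rw [div_le_iff₀ (by positivity)]
  linarith



/-- With `L` a full-rank lattice invariant under the reflection in the plane
`P` and `L₀ = L ∩ P`, for any basis `{v₁, v₂}` of the rank-2 lattice `L₀` there is
`w ∈ L ∖ L₀` of minimal distance to `P`, whose orthogonal projection to `P` lies in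
`{0, v₁/2, v₂/2, (v₁+v₂)/2}`, with `L = ⋃ₖ (L₀ + k w)`; moreover `L` is a vertical
translation lattice with respect to `P` iff such `w` can be chosen projecting to `0`. -/
theorem statement4 (P : Submodule ℝ E3) (hP : Module.finrank ℝ P = 2)
    (R : E3 ≃ₗᵢ[ℝ] E3)
    (hR₁ : ∀ x ∈ P, R x = x) (hR₂ : ∀ x ∈ Pᗮ, R x = -x)
    (L : AddSubgroup E3) (hL : IsFullLattice L)
    (hinv : R '' (L : Set E3) = (L : Set E3))
    (v₁ v₂ : E3) (hv₁ : v₁ ∈ L ∧ v₁ ∈ P) (hv₂ : v₂ ∈ L ∧ v₂ ∈ P)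
    (hindep : LinearIndependent ℝ ![v₁, v₂])
    (hbasis : ∀ x : E3, (x ∈ L ∧ x ∈ P) ↔ ∃ m n : ℤ, x = m • v₁ + n • v₂) :
    (∃ w : E3, w ∈ L ∧ w ∉ P ∧
      (∀ y : E3, y ∈ L → y ∉ P →
        Metric.infDist w (P : Set E3) ≤ Metric.infDist y (P : Set E3)) ∧
      ((P.orthogonalProjection w : E3) ∈
        ({0, (1/2 : ℝ) • v₁, (1/2 : ℝ) • v₂, (1/2 : ℝ) • (v₁ + v₂)} : Set E3)) ∧
      (∀ x ∈ L, ∃ (v : E3) (k : ℤ), (v ∈ L ∧ v ∈ P) ∧ x = v + k • w)) ∧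
    (IsVerticalLattice P L ↔
      ∃ w : E3, w ∈ L ∧ w ∉ P ∧
        (∀ y : E3, y ∈ L → y ∉ P →
          Metric.infDist w (P : Set E3) ≤ Metric.infDist y (P : Set E3)) ∧
        (P.orthogonalProjection w : E3) = 0 ∧
        (∀ x ∈ L, ∃ (v : E3) (k : ℤ), (v ∈ L ∧ v ∈ P) ∧ x = v + k • w)) := by
  -- dimensions
  have hdim : Module.finrank ℝ E3 = 3 := finrank_euclideanSpace_fin
  have hPorth : Module.finrank ℝ Pᗮ = 1 := by
    have h := Submodule.finrank_add_finrank_orthogonal (K := P)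
    rw [hP, hdim] at h
    omega
  -- a unit normal vector e to P
  obtain ⟨v, hvP, hv0⟩ : ∃ v : E3, v ∈ Pᗮ ∧ v ≠ 0 := by
    by_contra h
    push_neg at h
    have : Pᗮ = ⊥ := by
      rw [Submodule.eq_bot_iff]
      intro x hx
      by_contra hx0
      exact hx0 (h x hx ▸ rfl)
    rw [this] at hPorth
    simp at hPorth
  set e : E3 := ‖v‖⁻¹ • v with he
  have he1 : ‖e‖ = 1 := by
    rw [he, norm_smul, norm_inv, norm_norm]
    exact inv_mul_cancel₀ (norm_ne_zero_iff.2 hv0)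
  have he0 : e ≠ 0 := by
    intro h
    rw [h, norm_zero] at he1
    norm_num at he1
  have heP : e ∈ Pᗮ := Submodule.smul_mem _ _ hvP
  have hee : ⟪e, e⟫ = 1 := by
    rw [real_inner_self_eq_norm_mul_norm, he1]
    norm_num
  have hspan : Pᗮ = Submodule.span ℝ {e} := by
    have hle : Submodule.span ℝ ({e} : Set E3) ≤ Pᗮ := by
      rw [Submodule.span_le, Set.singleton_subset_iff]
      exact heP
    exact (Submodule.eq_of_le_of_finrank_eq hle
      (by rw [finrank_span_singleton he0, hPorth])).symm
  have key : ∀ x : E3, x ∈ P ↔ ⟪e, x⟫ = 0 := by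
    intro x
    constructor
    · intro hx
      rw [real_inner_comm]
      exact (Submodule.mem_orthogonal P e).1 heP x hx
    · intro hx
      have hxx : x ∈ Pᗮᗮ := by
        rw [Submodule.mem_orthogonal]
        intro u hu
        rw [hspan, Submodule.mem_span_singleton] at hu
        obtain ⟨c, rfl⟩ := hu
        rw [real_inner_smul_left, hx, mul_zero]
      rwa [Submodule.orthogonal_orthogonal] at hxx
  have hdecomp : ∀ x : E3, x - ⟪e, x⟫ • e ∈ P := by
    intro x
    rw [key, inner_sub_right, real_inner_smul_right, hee]
    ring
  have horth : ∀ x : E3, ⟪e, x⟫ • e ∈ Pᗮ := fun x => Submodule.smul_mem _ _ heP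
  have hproj : ∀ x : E3, (P.orthogonalProjection x : E3) = x - ⟪e, x⟫ • e := by
    intro x
    rw [← P.starProjection_apply]
    refine P.eq_starProjection_of_mem_orthogonal (hdecomp x) ?_
    simpa using horth x
  have hRx : ∀ x : E3, R x = x - (2 * ⟪e, x⟫) • e := by
    intro x
    have h1 : R (x - ⟪e, x⟫ • e) = x - ⟪e, x⟫ • e := hR₁ _ (hdecomp x)
    have h2 : R (⟪e, x⟫ • e) = -(⟪e, x⟫ • e) := hR₂ _ (horth x)
    have h3 : R x = R (x - ⟪e, x⟫ • e) + R (⟪e, x⟫ • e) := by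
      rw [← map_add]
      congr 1
      abel
    rw [h3, h1, h2]
    module
  have hRL : ∀ x ∈ L, R x ∈ L := by
    intro x hx
    have : R x ∈ R '' (L : Set E3) := ⟨x, hx, rfl⟩
    rwa [hinv] at this
  obtain ⟨ε, hε, hmin⟩ := exists_lattice_min L hL
  -- L is not contained in P
  have hLP : ∃ x ∈ L, x ∉ P := by
    by_contra h
    push_neg at h
    obtain ⟨b, hb⟩ := hL
    have hbL : ∀ i, b i ∈ L := by
      intro i
      rw [hb]
      refine ⟨Pi.single i 1, ?_⟩
      symm
      rw [Fintype.sum_eq_single i]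
      · simp
      · intro j hj
        simp [Pi.single_apply, hj]
    have htop : (⊤ : Submodule ℝ E3) ≤ P := by
      rw [← b.span_eq]
      rw [Submodule.span_le]
      rintro x ⟨i, rfl⟩
      exact h _ (hbL i)
    have : P = ⊤ := top_le_iff.1 htop
    rw [this, finrank_top, hdim] at hP
    omega
  -- the subgroup of heights
  set G : AddSubgroup ℝ :=
    { carrier := {g : ℝ | ∃ x ∈ L, ⟪e, x⟫ = g}
      add_mem' := by
        rintro g₁ g₂ ⟨x, hx, rfl⟩ ⟨y, hy, rfl⟩
        exact ⟨x + y, L.add_mem hx hy, inner_add_right _ _ _⟩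
      zero_mem' := ⟨0, L.zero_mem, inner_zero_right e⟩
      neg_mem' := by
        rintro g ⟨x, hx, rfl⟩
        exact ⟨-x, L.neg_mem hx, inner_neg_right _ _⟩ } with hG
  have hGmem : ∀ g : ℝ, g ∈ G ↔ ∃ x ∈ L, ⟪e, x⟫ = g := fun g => Iff.rfl
  have hGdisc : ∀ g ∈ G, g ≠ 0 → ε / 2 ≤ |g| := by
    rintro g ⟨x, hx, rfl⟩ hg
    have hyL : x - R x ∈ L := L.sub_mem hx (hRL x hx)
    have hy : x - R x = (2 * ⟪e, x⟫) • e := by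
      rw [hRx]
      abel
    have hy0 : x - R x ≠ 0 := by
      rw [hy]
      intro h
      rcases smul_eq_zero.1 h with h' | h'
      · rcases mul_eq_zero.1 h' with h2 | h2
        · norm_num at h2
        · exact hg h2
      · exact he0 h'
    have hle := hmin _ hyL hy0
    rw [hy, norm_smul, he1, mul_one, Real.norm_eq_abs, abs_mul] at hle
    rw [abs_two] at hle
    linarith
  have hGne : ∃ g ∈ G, g ≠ 0 := by
    obtain ⟨x, hxL, hxP⟩ := hLP
    refine ⟨⟪e, x⟫, ⟨x, hxL, rfl⟩, ?_⟩
    intro h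
    exact hxP ((key x).2 h)
  -- G is cyclic
  obtain ⟨a, ha⟩ : ∃ a : ℝ, G = AddSubgroup.closure {a} := by
    rcases AddSubgroup.dense_or_cyclic G with hd | h
    · exfalso
      obtain ⟨g, hgball, hgG⟩ := Metric.dense_iff.1 hd (ε/4) (ε/8) (by linarith)
      rw [mem_ball, Real.dist_eq] at hgball
      have h1 : g ≠ 0 := by
        intro h
        rw [h] at hgball
        rw [abs_sub_comm, abs_of_pos (by linarith)] at hgball
        linarith
      have h2 := hGdisc g hgG h1
      rcases abs_sub_lt_iff.1 hgball with ⟨hb1, hb2⟩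
      rcases abs_cases g with ⟨hg, _⟩ | ⟨hg, _⟩ <;> linarith
    · exact h
  have hmemG : ∀ g : ℝ, g ∈ G ↔ ∃ k : ℤ, k • a = g := by
    intro g
    rw [ha, AddSubgroup.mem_closure_singleton]
  have haG : a ∈ G := (hmemG a).2 ⟨1, one_smul _ _⟩
  have ha0 : a ≠ 0 := by
    obtain ⟨g, hgG, hg⟩ := hGne
    obtain ⟨k, rfl⟩ := (hmemG g).1 hgG
    intro h
    rw [h, smul_zero] at hg
    exact hg rfl
  obtain ⟨w₀, hw₀L, hw₀⟩ : ∃ x ∈ L, ⟪e, x⟫ = a := haG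
  -- inner products with v₁, v₂ vanish
  have hv₁e : ⟪e, v₁⟫ = 0 := (key v₁).1 hv₁.2
  have hv₂e : ⟪e, v₂⟫ = 0 := (key v₂).1 hv₂.2
  -- decomposition of w₀ + R w₀
  have hsumL : w₀ + R w₀ ∈ L := L.add_mem hw₀L (hRL _ hw₀L)
  have hsumP : w₀ + R w₀ ∈ P := by
    have h : w₀ + R w₀ = (2:ℝ) • (w₀ - ⟪e, w₀⟫ • e) := by
      rw [hRx]
      module
    rw [h]
    exact Submodule.smul_mem _ _ (hdecomp w₀)
  obtain ⟨m, n, hmn⟩ := (hbasis _).1 ⟨hsumL, hsumP⟩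
  set w : E3 := w₀ - ((m / 2 : ℤ) • v₁ + (n / 2 : ℤ) • v₂) with hwdef
  have hwL : w ∈ L :=
    L.sub_mem hw₀L (L.add_mem (AddSubgroup.zsmul_mem _ hv₁.1 _) (AddSubgroup.zsmul_mem _ hv₂.1 _))
  have hwe : ⟪e, w⟫ = a := by
    rw [hwdef, inner_sub_right, inner_add_right,
      ← Int.cast_smul_eq_zsmul ℝ, ← Int.cast_smul_eq_zsmul ℝ,
      real_inner_smul_right, real_inner_smul_right, hv₁e, hv₂e, hw₀]
    ring
  have hwP : w ∉ P := fun h => ha0 (hwe ▸ (key w).1 h)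
  -- the distance formula
  have hdist : ∀ x : E3, Metric.infDist x (P : Set E3) = |⟪e, x⟫| := by
    intro x
    apply le_antisymm
    · calc Metric.infDist x (P : Set E3) ≤ dist x (x - ⟪e, x⟫ • e) :=
            infDist_le_dist_of_mem (hdecomp x)
        _ = |⟪e, x⟫| := by
            rw [dist_eq_norm]
            have : x - (x - ⟪e, x⟫ • e) = ⟪e, x⟫ • e := by abel
            rw [this, norm_smul, he1, mul_one, Real.norm_eq_abs]
    · by_contra hlt
      push_neg at hlt
      obtain ⟨y, hyP, hyd⟩ := (infDist_lt_iff ⟨0, P.zero_mem⟩).1 hlt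
      have h1 : ⟪e, y⟫ = 0 := (key y).1 hyP
      have h2 : |⟪e, x⟫| ≤ dist x y := by
        calc |⟪e, x⟫| = |⟪e, x - y⟫| := by rw [inner_sub_right, h1, sub_zero]
          _ ≤ ‖e‖ * ‖x - y‖ := abs_real_inner_le_norm e (x - y)
          _ = dist x y := by rw [he1, one_mul, dist_eq_norm]
      linarith
  -- minimality of w
  have hminw : ∀ y : E3, y ∈ L → y ∉ P →
      Metric.infDist w (P : Set E3) ≤ Metric.infDist y (P : Set E3) := by
    intro y hyL hyP
    rw [hdist, hdist, hwe]
    obtain ⟨k, hk⟩ := (hmemG ⟪e, y⟫).1 ⟨y, hyL, rfl⟩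
    have hk0 : k ≠ 0 := by
      rintro rfl
      rw [zero_smul] at hk
      exact hyP ((key y).2 hk.symm)
    rw [← hk, zsmul_eq_mul, abs_mul]
    have : (1:ℝ) ≤ |(k:ℝ)| := by exact_mod_cast Int.one_le_abs hk0
    nlinarith [abs_nonneg a]
  -- the covering property
  have hunion : ∀ x ∈ L, ∃ (v : E3) (k : ℤ), (v ∈ L ∧ v ∈ P) ∧ x = v + k • w := by
    intro x hx
    obtain ⟨k, hk⟩ := (hmemG ⟪e, x⟫).1 ⟨x, hx, rfl⟩
    refine ⟨x - k • w, k, ⟨L.sub_mem hx (AddSubgroup.zsmul_mem _ hwL k), ?_⟩, by abel⟩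
    rw [key, inner_sub_right, ← Int.cast_smul_eq_zsmul ℝ, real_inner_smul_right, hwe,
      ← hk, zsmul_eq_mul, sub_self]
  -- the projection of w
  have hprojw : (P.orthogonalProjection w : E3)
      = (((m % 2 : ℤ) : ℝ) / 2) • v₁ + (((n % 2 : ℤ) : ℝ) / 2) • v₂ := by
    have hmr : (m : ℝ) = 2 * ((m / 2 : ℤ) : ℝ) + ((m % 2 : ℤ) : ℝ) := by
      exact_mod_cast (Int.mul_ediv_add_emod m 2).symm
    have hnr : (n : ℝ) = 2 * ((n / 2 : ℤ) : ℝ) + ((n % 2 : ℤ) : ℝ) := by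
      exact_mod_cast (Int.mul_ediv_add_emod n 2).symm
    have hmn' : w₀ + (w₀ - (2 * a) • e)
        = (2 * ((m / 2 : ℤ) : ℝ) + ((m % 2 : ℤ) : ℝ)) • v₁
          + (2 * ((n / 2 : ℤ) : ℝ) + ((n % 2 : ℤ) : ℝ)) • v₂ := by
      rw [← hmr, ← hnr]
      rw [← hw₀, ← hRx]
      rw [hmn, ← Int.cast_smul_eq_zsmul ℝ, ← Int.cast_smul_eq_zsmul ℝ]
    rw [hproj w, hwe, hwdef, ← Int.cast_smul_eq_zsmul ℝ, ← Int.cast_smul_eq_zsmul ℝ]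
    linear_combination (norm := module) ((1:ℝ)/2 : ℝ) • hmn'
  have hprojset : (P.orthogonalProjection w : E3) ∈
      ({0, (1/2 : ℝ) • v₁, (1/2 : ℝ) • v₂, (1/2 : ℝ) • (v₁ + v₂)} : Set E3) := by
    rw [hprojw]
    rcases Int.emod_two_eq_zero_or_one m with hm | hm <;>
      rcases Int.emod_two_eq_zero_or_one n with hn | hn <;>
      rw [hm, hn]
    · exact Set.mem_insert_iff.2 (Or.inl (by push_cast; module))
    · exact Set.mem_insert_iff.2 (Or.inr (Set.mem_insert_iff.2 (Or.inr
        (Set.mem_insert_iff.2 (Or.inl (by push_cast; module))))))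
    · exact Set.mem_insert_iff.2 (Or.inr (Set.mem_insert_iff.2 (Or.inl (by push_cast; module))))
    · exact Set.mem_insert_iff.2 (Or.inr (Set.mem_insert_iff.2 (Or.inr
        (Set.mem_insert_iff.2 (Or.inr (Set.mem_singleton_iff.2 (by push_cast; module)))))))
  constructor
  · exact ⟨w, hwL, hwP, hminw, hprojset, hunion⟩
  constructor
  · rintro ⟨w', hw'orth, hiff⟩
    have hw'0 : w' ≠ 0 := by
      rintro rfl
      obtain ⟨x, hxL, hxP⟩ := hLP
      obtain ⟨v', k, ⟨hv'L, hv'P⟩, hx⟩ := (hiff x).1 hxL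
      rw [smul_zero, add_zero] at hx
      exact hxP (hx ▸ hv'P)
    have hw'L : w' ∈ L := (hiff w').2 ⟨0, 1, ⟨L.zero_mem, P.zero_mem⟩, by simp⟩
    have hw'P : w' ∉ P := by
      intro h
      apply hw'0
      have h2 := (Submodule.mem_orthogonal P w').1 hw'orth w' h
      rwa [inner_self_eq_zero] at h2
    obtain ⟨c, hc⟩ := Submodule.mem_span_singleton.1 (hspan ▸ hw'orth)
    have hcw : ⟪e, w'⟫ = c := by
      rw [← hc, real_inner_smul_right, hee, mul_one]
    have hc0 : c ≠ 0 := by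
      rintro rfl
      rw [zero_smul] at hc
      exact hw'0 hc.symm
    refine ⟨w', hw'L, hw'P, ?_, ?_, fun x hx => (hiff x).1 hx⟩
    · intro y hyL hyP
      rw [hdist, hdist, hcw]
      obtain ⟨v', k, ⟨hv'L, hv'P⟩, hy⟩ := (hiff y).1 hyL
      have hye : ⟪e, y⟫ = (k : ℝ) * c := by
        rw [hy, inner_add_right, (key v').1 hv'P, zero_add, ← Int.cast_smul_eq_zsmul ℝ,
          real_inner_smul_right, hcw]
      have hk0 : k ≠ 0 := by
        rintro rfl
        apply hyP
        rw [key, hye]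
        norm_num
      rw [hye, abs_mul]
      have h1 : (1:ℝ) ≤ |(k:ℝ)| := by exact_mod_cast Int.one_le_abs hk0
      calc |c| = 1 * |c| := (one_mul _).symm
        _ ≤ |(k:ℝ)| * |c| := mul_le_mul_of_nonneg_right h1 (abs_nonneg c)
    · rw [hproj w', hcw, ← hc]
      exact sub_self _
  · rintro ⟨w'', hwL'', hwP'', hmin'', hproj0, hcover⟩
    refine ⟨w'', ?_, fun x => ⟨fun hx => hcover x hx, ?_⟩⟩
    · have hpw := hproj w''
      rw [hproj0] at hpw
      have hw : w'' = ⟪e, w''⟫ • e := by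
        have := hpw.symm
        rwa [sub_eq_zero] at this
      rw [hw]
      exact horth w''
    · rintro ⟨v', k, ⟨hv'L, _⟩, rfl⟩
      exact L.add_mem hv'L (AddSubgroup.zsmul_mem L hwL'' k)


end
end

section
/- Let Π be a plane through the origin in ℝ³, let L be a full-rank lattice invariant under the reflection in Π, set L₀ := L ∩ Π, and let w ∈ L ∖ L₀ be of minimal distance to Π among points of L ∖ L₀ with L = ⋃_{k∈ℤ}(L₀ + kw). Assume L is not a vertical translation lattice with respect to Π (equivalently, the orthogonal projection of w onto Π is nonzero and is the midpoint of 0 and a point of L₀). Then for every k ∈ ℤ and every x ∈ L₀ + kw, the orthogonal projection of x onto Π belongs to L if and only if k is even. -/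
noncomputable section

/-- With `L` a full-rank lattice invariant under the reflection in the
plane `P`, `L₀ = L ∩ P`, and `w ∈ L ∖ L₀` of minimal distance to `P` with
`L = ⋃ₖ (L₀ + k w)`, if `L` is not a vertical translation lattice with respect to `P`,
then for every `k ∈ ℤ` and every `x ∈ L₀ + k w`, the orthogonal projection of `x` onto `P`
belongs to `L` iff `k` is even. -/
theorem statement5 (P : Submodule ℝ E3) (hP : Module.finrank ℝ P = 2)
    (R : E3 ≃ₗᵢ[ℝ] E3)
    (hR₁ : ∀ x ∈ P, R x = x) (hR₂ : ∀ x ∈ Pᗮ, R x = -x)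
    (L : AddSubgroup E3) (hL : IsFullLattice L)
    (hinv : R '' (L : Set E3) = (L : Set E3))
    (w : E3) (hwL : w ∈ L) (hwP : w ∉ P)
    (hmin : ∀ y : E3, y ∈ L → y ∉ P →
      Metric.infDist w (P : Set E3) ≤ Metric.infDist y (P : Set E3))
    (hdecomp : ∀ x ∈ L, ∃ (v : E3) (k : ℤ), (v ∈ L ∧ v ∈ P) ∧ x = v + k • w)
    (hnotvert : ¬ IsVerticalLattice P L) :
    ∀ (k : ℤ) (v : E3), v ∈ L → v ∈ P →
      ((P.orthogonalProjectionOnto (v + k • w) : E3) ∈ L ↔ Even k) := by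
  set p : E3 := (P.orthogonalProjectionOnto w : E3) with hp
  have hpP : p ∈ P := (P.orthogonalProjectionOnto w).2
  have hqPo : w - p ∈ Pᗮ := P.sub_starProjection_mem_orthogonal w
  -- reflection sends w to 2p - w
  have hRw : R w = p - (w - p) := by
    have : w = p + (w - p) := by abel
    calc R w = R (p + (w - p)) := by rw [← this]
    _ = R p + R (w - p) := map_add _ _ _
    _ = p - (w - p) := by rw [hR₁ p hpP, hR₂ _ hqPo]; abel
  -- hence 2p ∈ L
  have hRwL : R w ∈ L := by
    have : R w ∈ R '' (L : Set E3) := ⟨w, hwL, rfl⟩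
    rwa [hinv] at this
  have h2p : (2 : ℤ) • p ∈ L := by
    have : (2 : ℤ) • p = w + R w := by rw [hRw]; module
    rw [this]; exact L.add_mem hwL hRwL
  -- projection formula
  have hproj : ∀ (k : ℤ) (v : E3), v ∈ P →
      (P.orthogonalProjectionOnto (v + k • w) : E3) = v + k • p := by
    intro k v hv
    rw [map_add, map_zsmul]
    simp [Submodule.starProjection_eq_self_iff.mpr hv, hp]
  intro k v hvL hvP
  rw [hproj k v hvP]
  constructor
  · -- if v + k•p ∈ L with k odd, L would be vertical
    intro hmem
    by_contra hodd
    rw [Int.not_even_iff_odd] at hodd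
    obtain ⟨m, hm⟩ := hodd
    -- then p ∈ L
    have hpL : p ∈ L := by
      have h1 : v + k • p - v - m • ((2 : ℤ) • p) = p := by
        rw [hm]; module
      have : v + k • p - v - m • ((2 : ℤ) • p) ∈ L :=
        L.sub_mem (L.sub_mem hmem hvL) (L.zsmul_mem h2p m)
      rwa [h1] at this
    -- so L is vertical with w' = w - p
    apply hnotvert
    refine ⟨w - p, hqPo, fun x => ?_⟩
    constructor
    · intro hx
      obtain ⟨u, j, ⟨huL, huP⟩, hxu⟩ := hdecomp x hx
      refine ⟨u + j • p, j, ⟨L.add_mem huL (L.zsmul_mem hpL j),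
        P.add_mem huP (zsmul_mem hpP j)⟩, ?_⟩
      rw [hxu]; module
    · rintro ⟨u, j, ⟨huL, -⟩, rfl⟩
      have : u + j • (w - p) = u - j • p + j • w := by module
      rw [this]
      exact L.add_mem (L.sub_mem huL (L.zsmul_mem hpL j)) (L.zsmul_mem hwL j)
  · rintro ⟨m, rfl⟩
    have : v + (m + m) • p = v + m • ((2 : ℤ) • p) := by module
    rw [this]
    exact L.add_mem hvL (L.zsmul_mem h2p m)

end
end

section
/- Let L be a full-rank lattice in ℝ² that is invariant under the reflection (x, y) ↦ (−x, y). Then there exist nonzero real numbers d₁, d₂ such that, for the diagonal linear map D = diag(d₁, d₂), either D(L) = Λ₍₁,₀₎ or D(L) = Λ₍₁,₁₎; equivalently, L is the image of Λ₍₁,₀₎ or of Λ₍₁,₁₎ under an invertible diagonal linear map. -/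
noncomputable section

/-- The plane `ℝ²`, as the space of pairs of reals. -/
abbrev V2 := Fin 2 → ℝ

/-- A full-rank lattice in `ℝ²`: the set of integer linear combinations of an
`ℝ`-basis of `ℝ²`. -/
def IsFullLattice2 (L : AddSubgroup V2) : Prop :=
  ∃ b : Module.Basis (Fin 2) ℝ V2,
    ∀ x, x ∈ L ↔ ∃ c : Fin 2 → ℤ, x = ∑ i, (c i : ℝ) • b i

/-- The square lattice `Λ₍₁,₀₎ = ℤ²`. -/
def squareLattice : Set V2 := {x | ∃ m n : ℤ, x = ![(m : ℝ), (n : ℝ)]}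

/-- The square-centred lattice `Λ₍₁,₁₎`: integer vectors whose two coordinates have the
same parity. -/
def squareCentredLattice : Set V2 :=
  {x | ∃ m n : ℤ, (m % 2 = n % 2) ∧ x = ![(m : ℝ), (n : ℝ)]}

/-- The subgroup of reals `x` with `(x,0) ∈ L` is cyclic. -/
lemma aux1 (L : AddSubgroup V2) (b0 b1 : V2)
    (hmem : ∀ x : V2, x ∈ L ↔ ∃ m n : ℤ, x = (m : ℝ) • b0 + (n : ℝ) • b1)
    (hβ : b1 1 ≠ 0) :
    ∃ a : ℝ, ∀ x : ℝ, ((![x, 0] : V2) ∈ L ↔ ∃ t : ℤ, x = t * a) := by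
  set T : AddSubgroup ℤ :=
    { carrier := {m : ℤ | ∃ n : ℤ, (m : ℝ) * b0 1 + (n : ℝ) * b1 1 = 0}
      zero_mem' := ⟨0, by simp⟩
      add_mem' := by
        rintro x y ⟨n1, h1⟩ ⟨n2, h2⟩
        exact ⟨n1 + n2, by push_cast; linarith⟩
      neg_mem' := by
        rintro x ⟨n1, h1⟩
        exact ⟨-n1, by push_cast; linarith⟩ } with hT
  obtain ⟨k, hk⟩ := Int.subgroup_cyclic T
  have hkT : k ∈ T := by
    rw [hk]; exact AddSubgroup.subset_closure (Set.mem_singleton k)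
  obtain ⟨nk, hnk⟩ := hkT
  refine ⟨(k : ℝ) * b0 0 + (nk : ℝ) * b1 0, fun x => ⟨?_, ?_⟩⟩
  · intro hx
    obtain ⟨m, n, he⟩ := (hmem _).1 hx
    have h0 : x = (m : ℝ) * b0 0 + (n : ℝ) * b1 0 := by
      have := congrFun he 0
      simpa using this
    have h1 : (0 : ℝ) = (m : ℝ) * b0 1 + (n : ℝ) * b1 1 := by
      have := congrFun he 1
      simpa using this
    have hmT : m ∈ T := ⟨n, by linarith⟩
    rw [hk, AddSubgroup.mem_closure_singleton] at hmT
    obtain ⟨t, ht⟩ := hmT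
    have hm' : (m : ℝ) = (t : ℝ) * (k : ℝ) := by
      exact_mod_cast congrArg (fun z : ℤ => (z : ℝ)) ht.symm
    have h2 : ((n : ℝ) - (t : ℝ) * (nk : ℝ)) * b1 1 = 0 := by
      linear_combination -h1 - (t : ℝ) * hnk - b0 1 * hm'
    have hn' : (n : ℝ) = (t : ℝ) * (nk : ℝ) := by
      rcases mul_eq_zero.1 h2 with h | h
      · linarith
      · exact absurd h hβ
    exact ⟨t, by rw [h0, hm', hn']; ring⟩
  · rintro ⟨t, rfl⟩
    refine (hmem _).2 ⟨t * k, t * nk, ?_⟩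
    funext i
    fin_cases i
    · push_cast
      simp only [Matrix.cons_val_zero, Pi.add_apply, Pi.smul_apply, smul_eq_mul]
      ring
    · push_cast
      simp only [Matrix.cons_val_one, Matrix.head_cons, Pi.add_apply, Pi.smul_apply,
        smul_eq_mul]
      linear_combination -(t : ℝ) * hnk

/-- The subgroup of reals `y` with `(0,y) ∈ L` is cyclic. -/
lemma aux2 (L : AddSubgroup V2) (b0 b1 : V2)
    (hmem : ∀ x : V2, x ∈ L ↔ ∃ m n : ℤ, x = (m : ℝ) • b0 + (n : ℝ) • b1)
    (hβ : b1 0 ≠ 0) :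
    ∃ a : ℝ, ∀ x : ℝ, ((![0, x] : V2) ∈ L ↔ ∃ t : ℤ, x = t * a) := by
  set T : AddSubgroup ℤ :=
    { carrier := {m : ℤ | ∃ n : ℤ, (m : ℝ) * b0 0 + (n : ℝ) * b1 0 = 0}
      zero_mem' := ⟨0, by simp⟩
      add_mem' := by
        rintro x y ⟨n1, h1⟩ ⟨n2, h2⟩
        exact ⟨n1 + n2, by push_cast; linarith⟩
      neg_mem' := by
        rintro x ⟨n1, h1⟩
        exact ⟨-n1, by push_cast; linarith⟩ } with hT
  obtain ⟨k, hk⟩ := Int.subgroup_cyclic T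
  have hkT : k ∈ T := by
    rw [hk]; exact AddSubgroup.subset_closure (Set.mem_singleton k)
  obtain ⟨nk, hnk⟩ := hkT
  refine ⟨(k : ℝ) * b0 1 + (nk : ℝ) * b1 1, fun x => ⟨?_, ?_⟩⟩
  · intro hx
    obtain ⟨m, n, he⟩ := (hmem _).1 hx
    have h0 : x = (m : ℝ) * b0 1 + (n : ℝ) * b1 1 := by
      have := congrFun he 1
      simpa using this
    have h1 : (0 : ℝ) = (m : ℝ) * b0 0 + (n : ℝ) * b1 0 := by
      have := congrFun he 0
      simpa using this
    have hmT : m ∈ T := ⟨n, by linarith⟩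
    rw [hk, AddSubgroup.mem_closure_singleton] at hmT
    obtain ⟨t, ht⟩ := hmT
    have hm' : (m : ℝ) = (t : ℝ) * (k : ℝ) := by
      exact_mod_cast congrArg (fun z : ℤ => (z : ℝ)) ht.symm
    have h2 : ((n : ℝ) - (t : ℝ) * (nk : ℝ)) * b1 0 = 0 := by
      linear_combination -h1 - (t : ℝ) * hnk - b0 0 * hm'
    have hn' : (n : ℝ) = (t : ℝ) * (nk : ℝ) := by
      rcases mul_eq_zero.1 h2 with h | h
      · linarith
      · exact absurd h hβ
    exact ⟨t, by rw [h0, hm', hn']; ring⟩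
  · rintro ⟨t, rfl⟩
    refine (hmem _).2 ⟨t * k, t * nk, ?_⟩
    funext i
    fin_cases i
    · push_cast
      simp only [Matrix.cons_val_zero, Pi.add_apply, Pi.smul_apply, smul_eq_mul]
      linear_combination -(t : ℝ) * hnk
    · push_cast
      simp only [Matrix.cons_val_one, Matrix.head_cons, Pi.add_apply, Pi.smul_apply,
        smul_eq_mul]
      ring

/-- A full-rank lattice in `ℝ²` invariant under the reflection
`(x, y) ↦ (-x, y)` is mapped by some invertible diagonal linear map `D = diag(d₁, d₂)`
onto either the square lattice `Λ₍₁,₀₎` or the square-centred lattice `Λ₍₁,₁₎`. -/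
theorem statement6 (L : AddSubgroup V2) (hL : IsFullLattice2 L)
    (hinv : (fun x : V2 => ![-(x 0), x 1]) '' (L : Set V2) = (L : Set V2)) :
    ∃ d₁ d₂ : ℝ, d₁ ≠ 0 ∧ d₂ ≠ 0 ∧
      ((fun x : V2 => ![d₁ * x 0, d₂ * x 1]) '' (L : Set V2) = squareLattice ∨
       (fun x : V2 => ![d₁ * x 0, d₂ * x 1]) '' (L : Set V2) = squareCentredLattice) := by
  obtain ⟨b, hb⟩ := hL
  have hmem : ∀ x : V2, x ∈ L ↔ ∃ m n : ℤ, x = (m : ℝ) • b 0 + (n : ℝ) • b 1 := by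
    intro x
    rw [hb]
    constructor
    · rintro ⟨c, rfl⟩
      exact ⟨c 0, c 1, by rw [Fin.sum_univ_two]⟩
    · rintro ⟨m, n, rfl⟩
      exact ⟨![m, n], by rw [Fin.sum_univ_two]; simp⟩
  have hmem' : ∀ x : V2, x ∈ L ↔ ∃ m n : ℤ, x = (m : ℝ) • b 1 + (n : ℝ) • b 0 := by
    intro x
    rw [hmem x]
    constructor <;> rintro ⟨m, n, rfl⟩ <;> exact ⟨n, m, add_comm _ _⟩
  -- not both second coordinates vanish
  have h2nd : b 0 1 ≠ 0 ∨ b 1 1 ≠ 0 := by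
    by_contra h
    push_neg at h
    have e := b.sum_repr ![0, 1]
    have e1 := congrFun e 1
    simp [Fin.sum_univ_two, h.1, h.2] at e1
  have h1st : b 0 0 ≠ 0 ∨ b 1 0 ≠ 0 := by
    by_contra h
    push_neg at h
    have e := b.sum_repr ![1, 0]
    have e1 := congrFun e 0
    simp [Fin.sum_univ_two, h.1, h.2] at e1
  obtain ⟨a, ha⟩ : ∃ a : ℝ, ∀ x : ℝ, ((![x, 0] : V2) ∈ L ↔ ∃ t : ℤ, x = t * a) := by
    rcases h2nd with h | h
    · exact aux1 L (b 1) (b 0) hmem' h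
    · exact aux1 L (b 0) (b 1) hmem h
  obtain ⟨c, hc⟩ : ∃ c : ℝ, ∀ y : ℝ, ((![0, y] : V2) ∈ L ↔ ∃ t : ℤ, y = t * c) := by
    rcases h1st with h | h
    · exact aux2 L (b 1) (b 0) hmem' h
    · exact aux2 L (b 0) (b 1) hmem h
  -- reflection stability
  have hσ : ∀ v ∈ L, (![-(v 0), v 1] : V2) ∈ L := by
    intro v hv
    have : (![-(v 0), v 1] : V2) ∈ (fun x : V2 => ![-(x 0), x 1]) '' (L : Set V2) :=
      Set.mem_image_of_mem _ hv
    rwa [hinv] at this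
  have hsub : ∀ v ∈ L, (![2 * v 0, 0] : V2) ∈ L := by
    intro v hv
    have h : (![2 * v 0, 0] : V2) = v - ![-(v 0), v 1] := by
      funext i; fin_cases i <;> simp <;> ring
    rw [h]
    exact L.sub_mem hv (hσ v hv)
  have hadd : ∀ v ∈ L, (![0, 2 * v 1] : V2) ∈ L := by
    intro v hv
    have h : (![0, 2 * v 1] : V2) = v + ![-(v 0), v 1] := by
      funext i; fin_cases i <;> simp <;> ring
    rw [h]
    exact L.add_mem hv (hσ v hv)
  -- basis vectors are in L
  have hbL : ∀ i, b i ∈ L := by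
    intro i
    fin_cases i
    · exact (hmem _).2 ⟨1, 0, by simp⟩
    · exact (hmem _).2 ⟨0, 1, by simp⟩
  have ha0 : a ≠ 0 := by
    intro h
    obtain ⟨v, hv, hv0⟩ : ∃ v, v ∈ L ∧ v 0 ≠ 0 := by
      rcases h1st with h' | h'
      · exact ⟨b 0, hbL 0, h'⟩
      · exact ⟨b 1, hbL 1, h'⟩
    obtain ⟨t, ht⟩ := (ha _).1 (hsub v hv)
    rw [h, mul_zero] at ht
    exact hv0 (by linarith)
  have hc0 : c ≠ 0 := by
    intro h
    obtain ⟨v, hv, hv1⟩ : ∃ v, v ∈ L ∧ v 1 ≠ 0 := by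
      rcases h2nd with h' | h'
      · exact ⟨b 0, hbL 0, h'⟩
      · exact ⟨b 1, hbL 1, h'⟩
    obtain ⟨t, ht⟩ := (hc _).1 (hadd v hv)
    rw [h, mul_zero] at ht
    exact hv1 (by linarith)
  have hMa : ∀ m : ℤ, (![(m : ℝ) * a, 0] : V2) ∈ L := fun m => (ha _).2 ⟨m, rfl⟩
  have hMc : ∀ n : ℤ, (![0, (n : ℝ) * c] : V2) ∈ L := fun n => (hc _).2 ⟨n, rfl⟩
  -- every lattice vector has half-integer coordinates
  have hhalf : ∀ v ∈ L, ∃ m n : ℤ, v 0 = (m : ℝ) * (a / 2) ∧ v 1 = (n : ℝ) * (c / 2) := by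
    intro v hv
    obtain ⟨m, hm⟩ := (ha _).1 (hsub v hv)
    obtain ⟨n, hn⟩ := (hc _).1 (hadd v hv)
    exact ⟨m, n, by linarith, by linarith⟩
  -- parity lemmas
  have hpar1 : ∀ m n : ℤ, (![(m : ℝ) * (a / 2), (n : ℝ) * (c / 2)] : V2) ∈ L →
      Even m → Even n := by
    rintro m n hv ⟨m', rfl⟩
    have hw : (![0, (n : ℝ) * (c / 2)] : V2) =
        ![((m' + m' : ℤ) : ℝ) * (a / 2), (n : ℝ) * (c / 2)] - ![(m' : ℝ) * a, 0] := by
      funext i; fin_cases i <;> simp <;> push_cast <;> ring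
    have hwL : (![0, (n : ℝ) * (c / 2)] : V2) ∈ L := by
      rw [hw]; exact L.sub_mem hv (hMa m')
    obtain ⟨t, ht⟩ := (hc _).1 hwL
    have hnt : (n : ℝ) = 2 * t := by
      have h2 : ((n : ℝ) - 2 * t) * c = 0 := by linarith [mul_comm (t : ℝ) c]; 
      rcases mul_eq_zero.1 h2 with h | h
      · linarith
      · exact absurd h hc0
    have : n = 2 * t := by exact_mod_cast hnt
    exact ⟨t, by omega⟩
  have hpar2 : ∀ m n : ℤ, (![(m : ℝ) * (a / 2), (n : ℝ) * (c / 2)] : V2) ∈ L →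
      Even n → Even m := by
    rintro m n hv ⟨n', rfl⟩
    have hw : (![(m : ℝ) * (a / 2), 0] : V2) =
        ![(m : ℝ) * (a / 2), ((n' + n' : ℤ) : ℝ) * (c / 2)] - ![0, (n' : ℝ) * c] := by
      funext i; fin_cases i <;> simp <;> push_cast <;> ring
    have hwL : (![(m : ℝ) * (a / 2), 0] : V2) ∈ L := by
      rw [hw]; exact L.sub_mem hv (hMc n')
    obtain ⟨t, ht⟩ := (ha _).1 hwL
    have hmt : (m : ℝ) = 2 * t := by
      have h2 : ((m : ℝ) - 2 * t) * a = 0 := by linarith [mul_comm (t : ℝ) a]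
      rcases mul_eq_zero.1 h2 with h | h
      · linarith
      · exact absurd h ha0
    have : m = 2 * t := by exact_mod_cast hmt
    exact ⟨t, by omega⟩
  have hpar : ∀ m n : ℤ, (![(m : ℝ) * (a / 2), (n : ℝ) * (c / 2)] : V2) ∈ L →
      m % 2 = n % 2 := by
    intro m n hv
    rcases Int.even_or_odd m with hm | hm
    · have hn := hpar1 m n hv hm
      rw [Int.even_iff] at hm hn; omega
    · have hn : ¬ Even n := fun h => (Int.not_odd_iff_even.mpr (hpar2 m n hv h)) hm
      rw [Int.even_iff] at hn; rw [Int.odd_iff] at hm; omega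
  by_cases hP : ∃ p q : ℤ, p % 2 = 1 ∧ q % 2 = 1 ∧
      (![(p : ℝ) * (a / 2), (q : ℝ) * (c / 2)] : V2) ∈ L
  · -- square-centred case
    refine ⟨2 / a, 2 / c, div_ne_zero two_ne_zero ha0, div_ne_zero two_ne_zero hc0,
      Or.inr ?_⟩
    ext z
    simp only [Set.mem_image, squareCentredLattice, Set.mem_setOf_eq, SetLike.mem_coe]
    constructor
    · rintro ⟨v, hv, rfl⟩
      obtain ⟨m, n, h0, h1⟩ := hhalf v hv
      have hveq : v = ![(m : ℝ) * (a / 2), (n : ℝ) * (c / 2)] := by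
        funext i; fin_cases i <;> simp [h0, h1]
      refine ⟨m, n, hpar m n (hveq ▸ hv), ?_⟩
      funext i; fin_cases i <;> simp [h0, h1] <;> field_simp <;> ring
    · rintro ⟨m, n, hmn, rfl⟩
      rcases Int.even_or_odd m with hm | hm
      · obtain ⟨m', rfl⟩ := hm
        have hn : Even n := by rw [Int.even_iff]; omega
        obtain ⟨n', rfl⟩ := hn
        refine ⟨![(m' : ℝ) * a, 0] + ![0, (n' : ℝ) * c],
          L.add_mem (hMa m') (hMc n'), ?_⟩
        funext i
        fin_cases i <;> simp <;> push_cast <;> field_simp <;> try ring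
      · have hm1 : m % 2 = 1 := Int.odd_iff.mp hm
        have hn1 : n % 2 = 1 := by omega
        obtain ⟨p, q, hp, hq, hpq⟩ := hP
        obtain ⟨s, hs⟩ : ∃ s : ℤ, m = p + 2 * s := ⟨(m - p) / 2, by omega⟩
        obtain ⟨t, ht⟩ : ∃ t : ℤ, n = q + 2 * t := ⟨(n - q) / 2, by omega⟩
        subst hs ht
        refine ⟨![(p : ℝ) * (a / 2), (q : ℝ) * (c / 2)] + ![(s : ℝ) * a, 0] +
          ![0, (t : ℝ) * c],
          L.add_mem (L.add_mem hpq (hMa s)) (hMc t), ?_⟩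
        funext i
        fin_cases i <;> simp <;> push_cast <;> field_simp <;> try ring
  · -- square case
    push_neg at hP
    refine ⟨1 / a, 1 / c, one_div_ne_zero ha0, one_div_ne_zero hc0, Or.inl ?_⟩
    ext z
    simp only [Set.mem_image, squareLattice, Set.mem_setOf_eq, SetLike.mem_coe]
    constructor
    · rintro ⟨v, hv, rfl⟩
      obtain ⟨m, n, h0, h1⟩ := hhalf v hv
      have hveq : v = ![(m : ℝ) * (a / 2), (n : ℝ) * (c / 2)] := by
        funext i; fin_cases i <;> simp [h0, h1]
      have hparity := hpar m n (hveq ▸ hv)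
      have hm2 : m % 2 = 0 := by
        by_contra h
        exact hP m n (by omega) (by omega) (hveq ▸ hv)
      obtain ⟨m', rfl⟩ : ∃ m', m = 2 * m' := ⟨m / 2, by omega⟩
      obtain ⟨n', rfl⟩ : ∃ n', n = 2 * n' := ⟨n / 2, by omega⟩
      refine ⟨m', n', ?_⟩
      funext i
      fin_cases i <;> simp [h0, h1] <;> push_cast <;> field_simp <;> try ring
    · rintro ⟨m, n, rfl⟩
      refine ⟨![(m : ℝ) * a, 0] + ![0, (n : ℝ) * c],
        L.add_mem (hMa m) (hMc n), ?_⟩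
      funext i
      fin_cases i <;> simp <;> push_cast <;> field_simp <;> try ring

end
end

section
/- Let u₁ = (1, 0) and u₂ = (1/2, √3/2) in ℝ², let R be the reflection in the line through the origin and u₁, and let R' be the reflection in the line through the origin and u₂. If L is a full-rank lattice in ℝ² preserved by both R and R', then there exists a real number a > 0 such that aL ∈ {L₍₃,₆₎, L₍₃,₆₎ᶜ}. -/
noncomputable section

/-- `u₁ = (1, 0)`. -/
def u₁ : V2 := ![1, 0]

/-- `u₂ = (1/2, √3/2)`. -/
def u₂ : V2 := ![1 / 2, Real.sqrt 3 / 2]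

/-- The triangular lattice `L₍₃,₆₎ = ℤu₁ + ℤu₂`. -/
def triLattice : Set V2 := {x | ∃ m n : ℤ, x = m • u₁ + n • u₂}

/-- The triangle-centred lattice `L₍₃,₆₎ᶜ = ℤ(u₁ + u₂) + ℤ(2u₁ - u₂)`. -/
def triCentredLattice : Set V2 :=
  {x | ∃ m n : ℤ, x = m • (u₁ + u₂) + n • ((2 : ℤ) • u₁ - u₂)}

/-- The reflection in the line through the origin and `u₁` (the `x`-axis). -/
def reflU₁ : V2 → V2 := fun x => ![x 0, -(x 1)]

/-- The reflection in the line through the origin and `u₂` (the line at angle `π/3`). -/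
def reflU₂ : V2 → V2 := fun x =>
  ![-(x 0) / 2 + (Real.sqrt 3 / 2) * x 1, (Real.sqrt 3 / 2) * x 0 + x 1 / 2]

namespace S12

/-- squared Euclidean norm -/
def q (x : V2) : ℝ := x 0 ^ 2 + x 1 ^ 2

/-- rotation by 120 degrees -/
def rot (x : V2) : V2 :=
  ![-(x 0) / 2 - (Real.sqrt 3 / 2) * x 1, (Real.sqrt 3 / 2) * x 0 - x 1 / 2]

lemma s3_sq : Real.sqrt 3 ^ 2 = 3 := Real.sq_sqrt (by norm_num)

lemma q_nonneg (x : V2) : 0 ≤ q x := by unfold q; positivity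

lemma eq_zero_iff (x : V2) : x = 0 ↔ x 0 = 0 ∧ x 1 = 0 := by
  constructor
  · rintro rfl; simp
  · rintro ⟨h0, h1⟩; funext i; fin_cases i <;> simpa

lemma q_pos {x : V2} (hx : x ≠ 0) : 0 < q x := by
  rcases lt_or_eq_of_le (q_nonneg x) with h | h
  · exact h
  · exfalso; apply hx
    unfold q at h
    rw [eq_zero_iff]
    have h0 : x 0 ^ 2 = 0 := by nlinarith [sq_nonneg (x 0), sq_nonneg (x 1)]
    have h1 : x 1 ^ 2 = 0 := by nlinarith [sq_nonneg (x 0), sq_nonneg (x 1)]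
    exact ⟨pow_eq_zero_iff (two_ne_zero) |>.mp h0, pow_eq_zero_iff (two_ne_zero) |>.mp h1⟩

lemma rot_apply0 (x : V2) : rot x 0 = -(x 0) / 2 - (Real.sqrt 3 / 2) * x 1 := rfl
lemma rot_apply1 (x : V2) : rot x 1 = (Real.sqrt 3 / 2) * x 0 - x 1 / 2 := by
  simp [rot]

/-- key quadratic identity -/
lemma q_comb (a b : ℝ) (v : V2) :
    q (a • v + b • rot v) = (a ^ 2 - a * b + b ^ 2) * q v := by
  simp only [q, Pi.add_apply, Pi.smul_apply, smul_eq_mul, rot_apply0, rot_apply1]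
  linear_combination (b ^ 2 * (v 0 ^ 2 + v 1 ^ 2) / 4) * s3_sq

end S12

namespace S12

lemma rot_lin (a b : ℝ) (x y : V2) :
    rot (a • x + b • y) = a • rot x + b • rot y := by
  funext i; fin_cases i <;>
    simp [rot, Pi.add_apply, Pi.smul_apply, smul_eq_mul] <;> ring

/-- rotation preserves the quadratic form -/
lemma q_rot (x : V2) : q (rot x) = q x := by
  simp only [q, rot_apply0, rot_apply1]
  linear_combination ((x 0 ^ 2 + x 1 ^ 2) / 4) * s3_sq

/-- finitely many lattice points in a ball -/
lemma finite_ball (L : AddSubgroup V2)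
    (b : Module.Basis (Fin 2) ℝ V2)
    (hb : ∀ x, x ∈ L ↔ ∃ c : Fin 2 → ℤ, x = ∑ i, (c i : ℝ) • b i) (r : ℝ) :
    {x : V2 | x ∈ L ∧ q x ≤ r}.Finite := by
  set C : Fin 2 → ℝ := fun j => ‖LinearMap.toContinuousLinearMap (b.coord j)‖ with hC
  have hCb : ∀ (j : Fin 2) (x : V2), |b.coord j x| ≤ C j * ‖x‖ := by
    intro j x
    simpa using (LinearMap.toContinuousLinearMap (b.coord j)).le_opNorm x
  have hC0 : ∀ j, 0 ≤ C j := fun j => norm_nonneg _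
  have hnorm : ∀ x : V2, q x ≤ r → ‖x‖ ≤ Real.sqrt r := by
    intro x hx
    rw [pi_norm_le_iff_of_nonneg (Real.sqrt_nonneg r)]
    intro i
    rw [Real.norm_eq_abs, ← Real.sqrt_sq_eq_abs]
    apply Real.sqrt_le_sqrt
    unfold q at hx
    fin_cases i <;> beta_reduce <;> simp only [Fin.zero_eta, Fin.mk_one] <;>
      nlinarith [sq_nonneg (x 0), sq_nonneg (x 1)]
  set M : ℝ := (max (C 0) (C 1)) * Real.sqrt r + 1 with hM
  set N : ℤ := ⌈M⌉ with hN
  apply Set.Finite.subset (Set.Finite.image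
    (fun p : ℤ × ℤ => (p.1 : ℝ) • b 0 + (p.2 : ℝ) • b 1)
    (Set.finite_Icc (-N, -N) (N, N)))
  rintro x ⟨hxL, hxq⟩
  obtain ⟨c, hc⟩ := (hb x).1 hxL
  have hx2 : x = (c 0 : ℝ) • b 0 + (c 1 : ℝ) • b 1 := by
    rw [hc]; simp [Fin.sum_univ_two]
  have hcoord : ∀ j, (c j : ℝ) = b.coord j x := by
    intro j
    rw [hx2]
    fin_cases j <;>
      simp [Module.Basis.coord_apply, map_add, map_smul, Module.Basis.repr_self, Finsupp.single_apply]
  have habs : ∀ j, |(c j : ℝ)| ≤ M := by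
    intro j
    calc |(c j : ℝ)| = |b.coord j x| := by rw [hcoord]
    _ ≤ C j * ‖x‖ := hCb j x
    _ ≤ (max (C 0) (C 1)) * Real.sqrt r := by
        apply mul_le_mul _ (hnorm x hxq) (norm_nonneg x) (le_max_iff.2 _)
        · fin_cases j <;> simp
        · left; exact hC0 0
    _ ≤ M := by rw [hM]; linarith
  have hmem : ∀ j, -N ≤ c j ∧ c j ≤ N := by
    intro j
    have h1 : (c j : ℝ) ≤ M := le_trans (le_abs_self _) (habs j)
    have h2 : -M ≤ (c j : ℝ) := neg_le_of_abs_le (habs j)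
    have h3 : M ≤ (N : ℝ) := Int.le_ceil M
    constructor
    · exact_mod_cast le_trans (by linarith : (-N : ℝ) ≤ (c j : ℝ)) (le_refl _)
    · exact_mod_cast le_trans h1 h3
  refine ⟨(c 0, c 1), ?_, hx2.symm⟩
  rw [Set.mem_Icc]
  exact ⟨⟨(hmem 0).1, (hmem 1).1⟩, ⟨(hmem 0).2, (hmem 1).2⟩⟩

end S12

namespace S12

lemma exists_min (L : AddSubgroup V2) (b : Module.Basis (Fin 2) ℝ V2)
    (hb : ∀ x, x ∈ L ↔ ∃ c : Fin 2 → ℤ, x = ∑ i, (c i : ℝ) • b i) :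
    ∃ v, v ∈ L ∧ v ≠ 0 ∧ ∀ w, w ∈ L → w ≠ 0 → q v ≤ q w := by
  have hb0 : b 0 ∈ L := by
    rw [hb]; exact ⟨![1, 0], by simp [Fin.sum_univ_two]⟩
  have hb0ne : b 0 ≠ 0 := b.ne_zero 0
  set r := q (b 0) with hr
  have hfin : {x : V2 | (x ∈ L ∧ q x ≤ r) ∧ x ≠ 0}.Finite :=
    (finite_ball L b hb r).subset (fun x hx => hx.1)
  obtain ⟨v, hv, hmin⟩ := Set.exists_min_image _ q hfin ⟨b 0, ⟨hb0, le_refl r⟩, hb0ne⟩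
  refine ⟨v, hv.1.1, hv.2, fun w hwL hw0 => ?_⟩
  rcases le_or_gt (q w) r with h | h
  · exact hmin w ⟨⟨hwL, h⟩, hw0⟩
  · exact le_trans (hmin (b 0) ⟨⟨hb0, le_refl r⟩, hb0ne⟩) (le_of_lt h)

lemma gen (L : AddSubgroup V2) (hrot : ∀ x, x ∈ L → rot x ∈ L)
    (v : V2) (hvL : v ∈ L) (hv0 : v ≠ 0)
    (hmin : ∀ w, w ∈ L → w ≠ 0 → q v ≤ q w) :
    (L : Set V2) = {w | ∃ m n : ℤ, w = (m : ℝ) • v + (n : ℝ) • rot v} := by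
  have hrv : rot v ∈ L := hrot v hvL
  have hqv : 0 < q v := q_pos hv0
  ext w
  simp only [SetLike.mem_coe, Set.mem_setOf_eq]
  constructor
  · intro hw
    have hs3 : (0:ℝ) < Real.sqrt 3 := by
      have : (0:ℝ) < 3 := by norm_num
      exact Real.sqrt_pos.mpr this
    have hd : v 0 * rot v 1 - v 1 * rot v 0 = (Real.sqrt 3 / 2) * q v := by
      simp only [rot_apply0, rot_apply1, q]; ring
    have hdpos : 0 < v 0 * rot v 1 - v 1 * rot v 0 := by
      rw [hd]; positivity
    set d := v 0 * rot v 1 - v 1 * rot v 0 with hdd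
    have hdne : d ≠ 0 := ne_of_gt hdpos
    set α : ℝ := (w 0 * rot v 1 - w 1 * rot v 0) / d with hα
    set β : ℝ := (v 0 * w 1 - v 1 * w 0) / d with hβ
    have hw2 : w = α • v + β • rot v := by
      funext i
      fin_cases i <;> beta_reduce <;> simp only [Fin.zero_eta, Fin.mk_one] <;>
        simp only [Pi.add_apply, Pi.smul_apply, smul_eq_mul, hα, hβ, hdd] <;>
        field_simp [show rot v 1 * v 0 - rot v 0 * v 1 ≠ 0 by intro h; apply hdne; rw [hdd]; linarith] <;> ring
    set m : ℤ := round α with hm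
    set n : ℤ := round β with hn
    have hw'mem : w - ((m : ℝ) • v + (n : ℝ) • rot v) ∈ L := by
      apply AddSubgroup.sub_mem _ hw
      rw [Int.cast_smul_eq_zsmul, Int.cast_smul_eq_zsmul]
      exact AddSubgroup.add_mem _ (AddSubgroup.zsmul_mem _ hvL m) (AddSubgroup.zsmul_mem _ hrv n)
    have hw'eq : w - ((m : ℝ) • v + (n : ℝ) • rot v)
        = (α - (m : ℝ)) • v + (β - (n : ℝ)) • rot v := by
      rw [hw2]; module
    have hqw' : q (w - ((m : ℝ) • v + (n : ℝ) • rot v)) ≤ 3 / 4 * q v := by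
      rw [hw'eq, q_comb]
      have h1 : |α - (m : ℝ)| ≤ 1 / 2 := abs_sub_round α
      have h2 : |β - (n : ℝ)| ≤ 1 / 2 := abs_sub_round β
      rw [abs_le] at h1 h2
      have hfac : (α - (m:ℝ)) ^ 2 - (α - (m:ℝ)) * (β - (n:ℝ)) + (β - (n:ℝ)) ^ 2 ≤ 3 / 4 := by
        nlinarith [sq_nonneg (α - (m:ℝ) + (β - (n:ℝ))), h1.1, h1.2, h2.1, h2.2,
          mul_nonneg (by linarith [h1.2] : (0:ℝ) ≤ 1/2 - (α - (m:ℝ))) (by linarith [h1.1] : (0:ℝ) ≤ α - (m:ℝ) + 1/2),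
          mul_nonneg (by linarith [h2.2] : (0:ℝ) ≤ 1/2 - (β - (n:ℝ))) (by linarith [h2.1] : (0:ℝ) ≤ β - (n:ℝ) + 1/2)]
      exact mul_le_mul_of_nonneg_right hfac (le_of_lt hqv)
    have hz : w - ((m : ℝ) • v + (n : ℝ) • rot v) = 0 := by
      by_contra hne
      have := hmin _ hw'mem hne
      linarith
    exact ⟨m, n, by rw [← sub_eq_zero]; exact hz⟩
  · rintro ⟨m, n, rfl⟩
    rw [Int.cast_smul_eq_zsmul, Int.cast_smul_eq_zsmul]
    exact AddSubgroup.add_mem _ (AddSubgroup.zsmul_mem _ hvL m) (AddSubgroup.zsmul_mem _ hrv n)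

end S12

namespace S12

lemma comp_ext {x y : V2} (h0 : x 0 = y 0) (h1 : x 1 = y 1) : x = y := by
  funext i; fin_cases i <;> assumption

lemma final_h (L : AddSubgroup V2) (v : V2) (hc : 0 < v 0) (h1 : v 1 = 0)
    (hgen : (L : Set V2) = {w | ∃ m n : ℤ, w = (m : ℝ) • v + (n : ℝ) • rot v}) :
    (fun x : V2 => (1 / v 0) • x) '' (L : Set V2) = triLattice := by
  have hc' : v 0 ≠ 0 := ne_of_gt hc
  have hA : (1 / v 0) • v = u₁ := by
    apply comp_ext <;>
      simp only [Pi.smul_apply, smul_eq_mul, u₁, h1, Matrix.cons_val_zero,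
        Matrix.cons_val_one, Matrix.head_cons] <;> field_simp <;> simp
  have hB : (1 / v 0) • rot v = ![-(1/2), Real.sqrt 3 / 2] := by
    apply comp_ext <;>
      simp only [Pi.smul_apply, smul_eq_mul, rot_apply0, rot_apply1, h1,
        Matrix.cons_val_zero, Matrix.cons_val_one, Matrix.head_cons] <;>
      field_simp <;> ring
  ext x
  simp only [Set.mem_image, SetLike.mem_coe, triLattice, Set.mem_setOf_eq]
  constructor
  · rintro ⟨y, hy, rfl⟩
    rw [← SetLike.mem_coe, hgen, Set.mem_setOf_eq] at hy
    obtain ⟨m, n, rfl⟩ := hy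
    refine ⟨m - n, n, ?_⟩
    rw [smul_add, smul_comm (1 / v 0) ((m:ℝ)) v, smul_comm (1 / v 0) ((n:ℝ)) (rot v),
      hA, hB]
    apply comp_ext <;>
      simp only [Pi.add_apply, Pi.smul_apply, smul_eq_mul, zsmul_eq_mul, Pi.mul_apply, Pi.intCast_apply, u₁, u₂,
        Matrix.cons_val_zero, Matrix.cons_val_one, Matrix.head_cons] <;>
      push_cast <;> ring
  · rintro ⟨m, n, rfl⟩
    refine ⟨((m + n : ℤ) : ℝ) • v + ((n : ℤ) : ℝ) • rot v, ?_, ?_⟩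
    · rw [← SetLike.mem_coe, hgen]; exact ⟨m + n, n, rfl⟩
    · rw [smul_add, smul_comm (1 / v 0) (((m + n : ℤ) : ℝ)) v,
        smul_comm (1 / v 0) (((n : ℤ) : ℝ)) (rot v), hA, hB]
      apply comp_ext <;>
        simp only [Pi.add_apply, Pi.smul_apply, smul_eq_mul, zsmul_eq_mul, Pi.mul_apply, Pi.intCast_apply, u₁, u₂,
          Matrix.cons_val_zero, Matrix.cons_val_one, Matrix.head_cons] <;>
        push_cast <;> ring

lemma final_v (L : AddSubgroup V2) (v : V2) (hc : 0 < v 1) (h0 : v 0 = 0)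
    (hgen : (L : Set V2) = {w | ∃ m n : ℤ, w = (m : ℝ) • v + (n : ℝ) • rot v}) :
    (fun x : V2 => (Real.sqrt 3 / v 1) • x) '' (L : Set V2) = triCentredLattice := by
  have hc' : v 1 ≠ 0 := ne_of_gt hc
  have hA : (Real.sqrt 3 / v 1) • v = ![0, Real.sqrt 3] := by
    apply comp_ext <;>
      simp only [Pi.smul_apply, smul_eq_mul, h0, Matrix.cons_val_zero,
        Matrix.cons_val_one, Matrix.head_cons] <;> field_simp <;> simp
  have hB : (Real.sqrt 3 / v 1) • rot v = ![-(3/2), -(Real.sqrt 3)/2] := by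
    apply comp_ext
    · simp only [Pi.smul_apply, smul_eq_mul, rot_apply0, rot_apply1, h0,
        Matrix.cons_val_zero, Matrix.cons_val_one, Matrix.head_cons]
      field_simp
      linear_combination -(v 1) * s3_sq
    · simp only [Pi.smul_apply, smul_eq_mul, rot_apply0, rot_apply1, h0,
        Matrix.cons_val_zero, Matrix.cons_val_one, Matrix.head_cons]
      field_simp
      ring
  ext x
  simp only [Set.mem_image, SetLike.mem_coe, triCentredLattice, Set.mem_setOf_eq]
  constructor
  · rintro ⟨y, hy, rfl⟩
    rw [← SetLike.mem_coe, hgen, Set.mem_setOf_eq] at hy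
    obtain ⟨m, n, rfl⟩ := hy
    refine ⟨m - n, -m, ?_⟩
    rw [smul_add, smul_comm (Real.sqrt 3 / v 1) ((m:ℝ)) v,
      smul_comm (Real.sqrt 3 / v 1) ((n:ℝ)) (rot v), hA, hB]
    apply comp_ext <;>
      simp only [Pi.add_apply, Pi.sub_apply, Pi.smul_apply, smul_eq_mul, zsmul_eq_mul, Pi.mul_apply, Pi.intCast_apply,
        u₁, u₂, Matrix.cons_val_zero, Matrix.cons_val_one, Matrix.head_cons] <;>
      push_cast <;> ring
  · rintro ⟨m, n, rfl⟩
    refine ⟨((-n : ℤ) : ℝ) • v + ((-(m + n) : ℤ) : ℝ) • rot v, ?_, ?_⟩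
    · rw [← SetLike.mem_coe, hgen]; exact ⟨-n, -(m + n), rfl⟩
    · rw [smul_add, smul_comm (Real.sqrt 3 / v 1) (((-n : ℤ) : ℝ)) v,
        smul_comm (Real.sqrt 3 / v 1) (((-(m + n) : ℤ) : ℝ)) (rot v), hA, hB]
      apply comp_ext <;>
        simp only [Pi.add_apply, Pi.sub_apply, Pi.smul_apply, smul_eq_mul, zsmul_eq_mul, Pi.mul_apply, Pi.intCast_apply,
          u₁, u₂, Matrix.cons_val_zero, Matrix.cons_val_one, Matrix.head_cons] <;>
        push_cast <;> ring

end S12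



namespace S12

lemma q_neg (v : V2) : q (-v) = q v := by simp [q]

lemma axis (L : AddSubgroup V2) (hrot : ∀ x, x ∈ L → rot x ∈ L)
    (v : V2) (hvL : v ∈ L) (hv0 : v ≠ 0)
    (hmin : ∀ w, w ∈ L → w ≠ 0 → q v ≤ q w)
    (haxis : v 1 = 0 ∨ v 0 = 0) :
    ∃ a : ℝ, 0 < a ∧
      ((fun x : V2 => a • x) '' (L : Set V2) = triLattice ∨
       (fun x : V2 => a • x) '' (L : Set V2) = triCentredLattice) := by
  have hs3 : (0:ℝ) < Real.sqrt 3 := Real.sqrt_pos.mpr (by norm_num)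
  rcases haxis with h | h
  · rcases lt_trichotomy (v 0) 0 with hlt | heq0 | hgt
    · have hvL' : -v ∈ L := AddSubgroup.neg_mem _ hvL
      have hne' : -v ≠ 0 := by simpa using hv0
      have hmin' : ∀ w, w ∈ L → w ≠ 0 → q (-v) ≤ q w := by
        intro w hw hw0; rw [q_neg]; exact hmin w hw hw0
      have hgen := gen L hrot (-v) hvL' hne' hmin'
      have hpos : (0:ℝ) < (-v) 0 := by simp only [Pi.neg_apply]; linarith
      refine ⟨1 / (-v) 0, one_div_pos.mpr hpos, Or.inl (final_h L (-v) hpos ?_ hgen)⟩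
      simp [Pi.neg_apply, h]
    · exact absurd ((eq_zero_iff v).2 ⟨heq0, h⟩) hv0
    · have hgen := gen L hrot v hvL hv0 hmin
      exact ⟨1 / v 0, one_div_pos.mpr hgt, Or.inl (final_h L v hgt h hgen)⟩
  · rcases lt_trichotomy (v 1) 0 with hlt | heq0 | hgt
    · have hvL' : -v ∈ L := AddSubgroup.neg_mem _ hvL
      have hne' : -v ≠ 0 := by simpa using hv0
      have hmin' : ∀ w, w ∈ L → w ≠ 0 → q (-v) ≤ q w := by
        intro w hw hw0; rw [q_neg]; exact hmin w hw hw0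
      have hgen := gen L hrot (-v) hvL' hne' hmin'
      have hpos : (0:ℝ) < (-v) 1 := by simp only [Pi.neg_apply]; linarith
      refine ⟨Real.sqrt 3 / (-v) 1, div_pos hs3 hpos,
        Or.inr (final_v L (-v) hpos ?_ hgen)⟩
      simp [Pi.neg_apply, h]
    · exact absurd ((eq_zero_iff v).2 ⟨h, heq0⟩) hv0
    · have hgen := gen L hrot v hvL hv0 hmin
      exact ⟨Real.sqrt 3 / v 1, div_pos hs3 hgt, Or.inr (final_v L v hgt h hgen)⟩

end S12

/-- A full-rank lattice in `ℝ²` preserved by the reflections in the lines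
through the origin and `u₁ = (1,0)`, resp. `u₂ = (1/2, √3/2)`, is - up to a positive scalar -
either the triangular lattice or the triangle-centred lattice. -/
theorem statement12 (L : AddSubgroup V2) (hL : IsFullLattice2 L)
    (h₁ : reflU₁ '' (L : Set V2) = (L : Set V2))
    (h₂ : reflU₂ '' (L : Set V2) = (L : Set V2)) :
    ∃ a : ℝ, 0 < a ∧
      ((fun x : V2 => a • x) '' (L : Set V2) = triLattice ∨
       (fun x : V2 => a • x) '' (L : Set V2) = triCentredLattice) := by
  classical
  obtain ⟨b, hb⟩ := hL
  have hmem1 : ∀ x, x ∈ L → reflU₁ x ∈ L := by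
    intro x hx
    have : reflU₁ x ∈ (L : Set V2) := h₁ ▸ Set.mem_image_of_mem reflU₁ hx
    exact this
  have hmem2 : ∀ x, x ∈ L → reflU₂ x ∈ L := by
    intro x hx
    have : reflU₂ x ∈ (L : Set V2) := h₂ ▸ Set.mem_image_of_mem reflU₂ hx
    exact this
  have hrot : ∀ x, x ∈ L → S12.rot x ∈ L := by
    intro x hx
    have hre : S12.rot x = reflU₂ (reflU₁ x) := by
      apply S12.comp_ext <;>
        simp only [S12.rot_apply0, S12.rot_apply1, reflU₁, reflU₂,
          Matrix.cons_val_zero, Matrix.cons_val_one, Matrix.head_cons] <;> ring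
    rw [hre]; exact hmem2 _ (hmem1 _ hx)
  obtain ⟨v, hvL, hv0, hmin⟩ := S12.exists_min L b hb
  have hqv : 0 < S12.q v := S12.q_pos hv0
  have hgen := S12.gen L hrot v hvL hv0 hmin
  have hRv : reflU₁ v ∈ (L : Set V2) := hmem1 v hvL
  rw [hgen, Set.mem_setOf_eq] at hRv
  obtain ⟨m, n, heq⟩ := hRv
  have e0 : v 0 = (m:ℝ) * v 0 + (n:ℝ) * (-(v 0) / 2 - (Real.sqrt 3 / 2) * v 1) := by
    have := congrFun heq 0
    simpa only [reflU₁, Matrix.cons_val_zero, Pi.add_apply, Pi.smul_apply,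
      smul_eq_mul, S12.rot_apply0] using this
  have e1 : -(v 1) = (m:ℝ) * v 1 + (n:ℝ) * ((Real.sqrt 3 / 2) * v 0 - v 1 / 2) := by
    have := congrFun heq 1
    simpa only [reflU₁, Matrix.cons_val_one, Matrix.head_cons, Matrix.cons_val_zero, Pi.add_apply,
      Pi.smul_apply, smul_eq_mul, S12.rot_apply1] using this
  have hq : S12.q (reflU₁ v) = S12.q v := by
    simp only [S12.q, reflU₁, Matrix.cons_val_zero, Matrix.cons_val_one,
      Matrix.head_cons]
    ring
  have hZr : ((m:ℝ)^2 - (m:ℝ)*(n:ℝ) + (n:ℝ)^2) = 1 := by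
    have h1 : ((m:ℝ)^2 - (m:ℝ)*(n:ℝ) + (n:ℝ)^2) * S12.q v = 1 * S12.q v := by
      rw [one_mul, ← S12.q_comb (m:ℝ) (n:ℝ) v, ← heq, hq]
    exact mul_right_cancel₀ (ne_of_gt hqv) h1
  have hZ : m^2 - m*n + n^2 = 1 := by exact_mod_cast hZr
  have hm2 : m^2 ≤ 1 := by nlinarith [sq_nonneg (2*n - m)]
  have hn2 : n^2 ≤ 1 := by nlinarith [sq_nonneg (2*m - n)]
  have hmlo : -1 ≤ m := by nlinarith
  have hmhi : m ≤ 1 := by nlinarith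
  have hnlo : -1 ≤ n := by nlinarith
  have hnhi : n ≤ 1 := by nlinarith
  -- helper facts for the composite candidate vectors
  have hsumL : v + S12.rot v ∈ L := AddSubgroup.add_mem _ hvL (hrot v hvL)
  have hsumq : S12.q (v + S12.rot v) = S12.q v := by
    have := S12.q_comb 1 1 v
    simpa using this
  have hsum0 : v + S12.rot v ≠ 0 := by
    intro hh; rw [hh] at hsumq
    simp only [S12.q, Pi.zero_apply] at hsumq
    have h' := S12.q_pos hv0
    simp only [S12.q] at h'
    nlinarith
  have hsummin : ∀ w, w ∈ L → w ≠ 0 → S12.q (v + S12.rot v) ≤ S12.q w := by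
    intro w hw hw0; rw [hsumq]; exact hmin w hw hw0
  have hrL : S12.rot v ∈ L := hrot v hvL
  have hrq : S12.q (S12.rot v) = S12.q v := S12.q_rot v
  have hr0 : S12.rot v ≠ 0 := by
    intro hh; rw [hh] at hrq
    simp only [S12.q, Pi.zero_apply] at hrq
    have h' := S12.q_pos hv0
    simp only [S12.q] at h'
    nlinarith
  have hrmin : ∀ w, w ∈ L → w ≠ 0 → S12.q (S12.rot v) ≤ S12.q w := by
    intro w hw hw0; rw [hrq]; exact hmin w hw hw0
  interval_cases m <;> interval_cases n
  · -- m = -1, n = -1 : rot v is horizontal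
    refine S12.axis L hrot (S12.rot v) hrL hr0 hrmin (Or.inl ?_)
    rw [S12.rot_apply1]; linarith
  · -- m = -1, n = 0 : v is vertical
    refine S12.axis L hrot v hvL hv0 hmin (Or.inr ?_)
    linarith
  · -- m = -1, n = 1 : impossible
    norm_num at hZ
  · -- m = 0, n = -1 : v + rot v is vertical
    refine S12.axis L hrot (v + S12.rot v) hsumL hsum0 hsummin (Or.inr ?_)
    simp only [Pi.add_apply, S12.rot_apply0]; linarith
  · -- m = 0, n = 0 : impossible
    norm_num at hZ
  · -- m = 0, n = 1 : v + rot v is horizontal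
    refine S12.axis L hrot (v + S12.rot v) hsumL hsum0 hsummin (Or.inl ?_)
    simp only [Pi.add_apply, S12.rot_apply1]; linarith
  · -- m = 1, n = -1 : impossible
    norm_num at hZ
  · -- m = 1, n = 0 : v is horizontal
    refine S12.axis L hrot v hvL hv0 hmin (Or.inl ?_)
    linarith
  · -- m = 1, n = 1 : rot v is vertical
    refine S12.axis L hrot (S12.rot v) hrL hr0 hrmin (Or.inr ?_)
    rw [S12.rot_apply0]; linarith

end
end

section
/- Let S be a linear isometry of ℝ³ of order 3 whose fixed-point set is a line ℓ through the origin (a 3-fold rotation about ℓ), let Π = ℓ^⊥, and let L be a full-rank lattice in ℝ³ preserved by S. Then: (i) L ∩ ℓ is a rank-1 lattice, i.e. L ∩ ℓ = ℤy for some nonzero y ∈ ℓ; (ii) L ∩ Π is a rank-2 lattice spanning Π; and (iii) for every x ∈ L, the orthogonal projection of 3x onto Π belongs to L ∩ Π. -/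
noncomputable section

open Submodule Module

set_option maxHeartbeats 1000000
set_option synthInstance.maxHeartbeats 100000

/-- Let `S` be a linear isometry of `ℝ³` of order `3` whose fixed-point set
is a line `ℓ` through the origin, let `Π = ℓ^⊥`, and let `L` be a full-rank lattice preserved
by `S`.  Then (i) `L ∩ ℓ = ℤ y` for some nonzero `y ∈ ℓ`; (ii) `L ∩ Π` is a rank-2 lattice
spanning `Π`; (iii) for every `x ∈ L` the orthogonal projection of `3x` onto `Π` lies in
`L ∩ Π`. -/
theorem statement13 (S : E3 ≃ₗᵢ[ℝ] E3) (hord : orderOf S = 3)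
    (ℓ : Submodule ℝ E3) (hℓ : Module.finrank ℝ ℓ = 1)
    (hfix : ∀ x : E3, S x = x ↔ x ∈ ℓ)
    (L : AddSubgroup E3) (hL : IsFullLattice L)
    (hpres : S '' (L : Set E3) = (L : Set E3)) :
    (∃ y : E3, y ≠ 0 ∧ y ∈ ℓ ∧
      (∀ x : E3, (x ∈ L ∧ x ∈ ℓ) ↔ ∃ k : ℤ, x = k • y)) ∧
    (∃ w₁ w₂ : E3, w₁ ∈ ℓᗮ ∧ w₂ ∈ ℓᗮ ∧ LinearIndependent ℝ ![w₁, w₂] ∧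
      Submodule.span ℝ {w₁, w₂} = ℓᗮ ∧
      (∀ x : E3, (x ∈ L ∧ x ∈ ℓᗮ) ↔ ∃ m n : ℤ, x = m • w₁ + n • w₂)) ∧
    (∀ x ∈ L, (Submodule.orthogonalProjectionOnto ℓᗮ ((3 : ℝ) • x) : E3) ∈ L) := by
  classical
  obtain ⟨b, hb⟩ := hL
  -- `S` preserves `L`
  have hSL : ∀ x ∈ L, S x ∈ L := by
    intro x hx
    have : S x ∈ S '' (L : Set E3) := ⟨x, hx, rfl⟩
    rwa [hpres] at this
  -- `S` has order 3
  have hS3 : ∀ x : E3, S (S (S x)) = x := by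
    intro x
    have h := pow_orderOf_eq_one S
    rw [hord] at h
    have := congrArg (fun T : E3 ≃ₗᵢ[ℝ] E3 => T x) h
    simpa [pow_succ, LinearIsometryEquiv.coe_mul, Function.comp] using this
  -- `S` preserves `ℓᗮ`
  have hSperp : ∀ x ∈ ℓᗮ, S x ∈ ℓᗮ := by
    intro x hx
    rw [Submodule.mem_orthogonal] at hx ⊢
    intro z hz
    have hz' : S z = z := (hfix z).2 hz
    calc inner ℝ z (S x) = inner ℝ (S z) (S x) := by rw [hz']
    _ = inner ℝ z x := S.inner_map_map z x
    _ = 0 := hx z hz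
  -- key algebraic identity
  have hkey : ∀ x : E3, x + S x + S (S x)
      = (3 : ℝ) • ((orthogonalProjection ℓ x : ℓ) : E3) := by
    intro x
    set p := ((orthogonalProjection ℓ x : ℓ) : E3) with hp_def
    have hp : p ∈ ℓ := SetLike.coe_mem _
    have hq : x - p ∈ ℓᗮ := sub_starProjection_mem_orthogonal x
    set q := x - p with hq_def
    have hSp : S p = p := (hfix p).2 hp
    have hw : q + S q + S (S q) = 0 := by
      have h1 : q + S q + S (S q) ∈ ℓ := by
        rw [← hfix]
        simp only [map_add]
        rw [hS3 q]
        abel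
      have h2 : q + S q + S (S q) ∈ ℓᗮ :=
        add_mem (add_mem hq (hSperp _ hq)) (hSperp _ (hSperp _ hq))
      have : q + S q + S (S q) ∈ ℓ ⊓ ℓᗮ := ⟨h1, h2⟩
      rwa [Submodule.inf_orthogonal_eq_bot, Submodule.mem_bot] at this
    have hx : x = p + q := by rw [hq_def]; abel
    calc x + S x + S (S x) = (p + q) + S (p + q) + S (S (p + q)) := by rw [← hx]
    _ = (p + q) + (p + S q) + (p + S (S q)) := by simp only [map_add, hSp]
    _ = (p + p + p) + (q + S q + S (S q)) := by abel
    _ = (3 : ℝ) • p := by rw [hw, add_zero]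
                          rw [show (3 : ℝ) = 1 + 1 + 1 by norm_num]
                          simp [add_smul]
  have hL3proj : ∀ x ∈ L, (3 : ℝ) • ((orthogonalProjection ℓ x : ℓ) : E3) ∈ L := by
    intro x hx
    rw [← hkey]
    exact add_mem (add_mem hx (hSL x hx)) (hSL _ (hSL x hx))
  -- part (iii)
  have part3 : ∀ x ∈ L, ((orthogonalProjection ℓᗮ ((3 : ℝ) • x) : ℓᗮ) : E3) ∈ L := by
    intro x hx
    rw [show ((orthogonalProjection ℓᗮ ((3 : ℝ) • x) : ℓᗮ) : E3) = (3 : ℝ) • x - ((orthogonalProjection ℓ ((3 : ℝ) • x) : ℓ) : E3) from starProjection_orthogonal_val _]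
    have h3x : (3 : ℝ) • x ∈ L := by
      have : (3 : ℝ) • x = (3 : ℤ) • x := by
        rw [← Int.cast_smul_eq_zsmul ℝ]; norm_num
      rw [this]
      exact zsmul_mem hx 3
    have : ((orthogonalProjection ℓ ((3 : ℝ) • x) : ℓ) : E3)
        = (3 : ℝ) • ((orthogonalProjection ℓ x : ℓ) : E3) := by
      simp [map_smul]
    rw [this]
    exact sub_mem h3x (hL3proj x hx)
  -- the lattice as a ℤ-submodule
  set M : Submodule ℤ E3 := Submodule.span ℤ (Set.range ⇑b) with hM_def
  have hM : ∀ x : E3, x ∈ L ↔ x ∈ M := by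
    intro x
    rw [hb]
    constructor
    · rintro ⟨c, rfl⟩
      refine sum_mem fun i _ => ?_
      rw [Int.cast_smul_eq_zsmul]
      exact zsmul_mem (Submodule.subset_span (Set.mem_range_self i)) _
    · intro hx
      obtain ⟨c, hc⟩ := (Submodule.mem_span_range_iff_exists_fun ℤ).mp hx
      exact ⟨c, by rw [← hc]; simp [Int.cast_smul_eq_zsmul]⟩
  haveI hMdisc : DiscreteTopology M := inferInstance
  -- generic construction of the sublattice in a subspace
  have hgen : ∀ W : Submodule ℝ E3,
      (∀ i : Fin 3, (3 : ℝ) • ((orthogonalProjection W (b i) : W) : E3) ∈ M) →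
      Submodule.span ℝ ((ZLattice.comap ℝ M W.subtype : Submodule ℤ W) : Set W) = ⊤ := by
    intro W hW
    rw [eq_top_iff]
    rintro ⟨z, hz⟩ -
    have hz' : ((orthogonalProjection W z : W) : E3) = z := by
      exact starProjection_eq_self_iff.mpr hz
    have hrepr : z = ∑ i, (b.repr z i / 3) •
        ((3 : ℝ) • ((orthogonalProjection W (b i) : W) : E3)) := by
      simp_rw [smul_smul, div_mul_cancel₀ _ (three_ne_zero (α := ℝ))]
      conv_lhs => rw [← hz', ← b.sum_repr z]
      simp only [map_sum, map_smul, Submodule.coe_sum, Submodule.coe_smul]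
    have hmem : ∀ i : Fin 3,
        (⟨(3 : ℝ) • ((orthogonalProjection W (b i) : W) : E3),
          smul_mem W _ (SetLike.coe_mem _)⟩ : W)
          ∈ (ZLattice.comap ℝ M W.subtype : Submodule ℤ W) := by
      intro i
      exact hW i
    have : (⟨z, hz⟩ : W) = ∑ i, (b.repr z i / 3) •
        (⟨(3 : ℝ) • ((orthogonalProjection W (b i) : W) : E3),
          smul_mem W _ (SetLike.coe_mem _)⟩ : W) := by
      apply Subtype.ext
      push_cast
      exact hrepr
    rw [this]
    exact sum_mem fun i _ => smul_mem _ _ (Submodule.subset_span (hmem i))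
  -- the two coordinate lattices
  have hbL : ∀ i, b i ∈ L := fun i => (hM _).2 (Submodule.subset_span (Set.mem_range_self i))
  have hWl : ∀ i : Fin 3, (3 : ℝ) • ((orthogonalProjection ℓ (b i) : ℓ) : E3) ∈ M :=
    fun i => (hM _).1 (hL3proj _ (hbL i))
  have hWperp : ∀ i : Fin 3, (3 : ℝ) • ((orthogonalProjection ℓᗮ (b i) : ℓᗮ) : E3) ∈ M := by
    intro i
    have h := part3 _ (hbL i)
    have : ((orthogonalProjection ℓᗮ ((3 : ℝ) • b i) : ℓᗮ) : E3)
        = (3 : ℝ) • ((orthogonalProjection ℓᗮ (b i) : ℓᗮ) : E3) := by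
      simp [map_smul]
    rw [this] at h
    exact (hM _).1 h
  set N₁ : Submodule ℤ ℓ := ZLattice.comap ℝ M ℓ.subtype with hN₁_def
  set N₂ : Submodule ℤ ℓᗮ := ZLattice.comap ℝ M ℓᗮ.subtype with hN₂_def
  haveI : DiscreteTopology N₁ :=
    ZLattice.comap_discreteTopology ℝ M continuous_subtype_val (Submodule.injective_subtype ℓ)
  haveI : DiscreteTopology N₂ :=
    ZLattice.comap_discreteTopology ℝ M continuous_subtype_val (Submodule.injective_subtype ℓᗮ)
  haveI : IsZLattice ℝ N₁ := ⟨hgen ℓ hWl⟩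
  haveI : IsZLattice ℝ N₂ := ⟨hgen ℓᗮ hWperp⟩
  have hr1 : finrank ℤ N₁ = 1 := (ZLattice.rank ℝ N₁).trans hℓ
  have hrperp : finrank ℝ ℓᗮ = 2 := by
    have h := Submodule.finrank_add_finrank_orthogonal (K := ℓ)
    have h3 : finrank ℝ E3 = 3 := by simp [finrank_euclideanSpace_fin]
    omega
  have hr2 : finrank ℤ N₂ = 2 := (ZLattice.rank ℝ N₂).trans hrperp
  haveI : Module.Finite ℤ N₁ := ZLattice.module_finite ℝ N₁
  haveI : Module.Free ℤ N₁ := ZLattice.module_free ℝ N₁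
  haveI : Module.Finite ℤ N₂ := ZLattice.module_finite ℝ N₂
  haveI : Module.Free ℤ N₂ := ZLattice.module_free ℝ N₂
  set c₁ : Basis (Fin 1) ℤ N₁ := Module.finBasisOfFinrankEq ℤ N₁ hr1 with hc₁_def
  set c₂ : Basis (Fin 2) ℤ N₂ := Module.finBasisOfFinrankEq ℤ N₂ hr2 with hc₂_def
  have hmemN₁ : ∀ v : ℓ, v ∈ N₁ ↔ (v : E3) ∈ M := fun v => Iff.rfl
  have hmemN₂ : ∀ v : ℓᗮ, v ∈ N₂ ↔ (v : E3) ∈ M := fun v => Iff.rfl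
  refine ⟨?_, ?_, part3⟩
  · -- part (i)
    set y : E3 := (((c₁ 0 : N₁) : ℓ) : E3) with hy_def
    have hyℓ : y ∈ ℓ := SetLike.coe_mem _
    have hyM : y ∈ M := (hmemN₁ _).1 (SetLike.coe_mem (c₁ 0))
    refine ⟨y, ?_, hyℓ, ?_⟩
    · intro h
      exact c₁.ne_zero 0 (Subtype.ext (Subtype.ext h))
    · intro x
      constructor
      · rintro ⟨hxL, hxℓ⟩
        have hxN : (⟨x, hxℓ⟩ : ℓ) ∈ N₁ := (hmemN₁ _).2 ((hM x).1 hxL)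
        set v : N₁ := ⟨⟨x, hxℓ⟩, hxN⟩ with hv_def
        refine ⟨c₁.repr v 0, ?_⟩
        have hs := c₁.sum_repr v
        rw [Fin.sum_univ_one] at hs
        have hsm : (((c₁.repr v 0 • c₁ 0 : N₁) : ℓ) : E3) = (c₁.repr v 0) • y := by
          rw [Submodule.coe_smul, Submodule.coe_smul_of_tower, hy_def]
        rw [← hsm, hs]
      · rintro ⟨k, rfl⟩
        exact ⟨zsmul_mem ((hM y).2 hyM) k, zsmul_mem hyℓ k⟩
  · -- part (ii)
    set w₁ : E3 := (((c₂ 0 : N₂) : ℓᗮ) : E3) with hw₁_def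
    set w₂ : E3 := (((c₂ 1 : N₂) : ℓᗮ) : E3) with hw₂_def
    have hw₁ : w₁ ∈ ℓᗮ := SetLike.coe_mem _
    have hw₂ : w₂ ∈ ℓᗮ := SetLike.coe_mem _
    have hw₁M : w₁ ∈ M := (hmemN₂ _).1 (SetLike.coe_mem (c₂ 0))
    have hw₂M : w₂ ∈ M := (hmemN₂ _).1 (SetLike.coe_mem (c₂ 1))
    set cB : Basis (Fin 2) ℝ ℓᗮ := c₂.ofZLatticeBasis ℝ N₂ with hcB_def
    have hcB : ∀ i : Fin 2, (ℓᗮ.subtype) (cB i) = ((c₂ i : ℓᗮ) : E3) := by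
      intro i
      rw [hcB_def]
      simp only [Submodule.subtype_apply, Basis.ofZLatticeBasis_apply]
    have hfun : ![w₁, w₂] = fun i : Fin 2 => (ℓᗮ.subtype) (cB i) := by
      funext i
      rw [hcB i]
      fin_cases i <;> rfl
    refine ⟨w₁, w₂, hw₁, hw₂, ?_, ?_, ?_⟩
    · rw [hfun]
      exact cB.linearIndependent.map' ℓᗮ.subtype (Submodule.ker_subtype _)
    · have hset : ({w₁, w₂} : Set E3) = ℓᗮ.subtype '' Set.range cB := by
        ext v
        simp only [Set.mem_insert_iff, Set.mem_singleton_iff, Set.mem_image, Set.mem_range]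
        constructor
        · rintro (rfl | rfl)
          · exact ⟨cB 0, ⟨0, rfl⟩, by simp [hcB_def, Basis.ofZLatticeBasis_apply, hw₁_def]⟩
          · exact ⟨cB 1, ⟨1, rfl⟩, by simp [hcB_def, Basis.ofZLatticeBasis_apply, hw₂_def]⟩
        · rintro ⟨-, ⟨i, rfl⟩, rfl⟩
          fin_cases i
          · left; simp [hcB_def, Basis.ofZLatticeBasis_apply, hw₁_def]
          · right; simp [hcB_def, Basis.ofZLatticeBasis_apply, hw₂_def]
      rw [hset, ← Submodule.map_span, cB.span_eq, Submodule.map_top, Submodule.range_subtype]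
    · intro x
      constructor
      · rintro ⟨hxL, hxp⟩
        have hxN : (⟨x, hxp⟩ : ℓᗮ) ∈ N₂ := (hmemN₂ _).2 ((hM x).1 hxL)
        set v : N₂ := ⟨⟨x, hxp⟩, hxN⟩ with hv_def
        refine ⟨c₂.repr v 0, c₂.repr v 1, ?_⟩
        have hs := c₂.sum_repr v
        rw [Fin.sum_univ_two] at hs
        have hsm : (((c₂.repr v 0 • c₂ 0 + c₂.repr v 1 • c₂ 1 : N₂) : ℓᗮ) : E3)
            = (c₂.repr v 0) • w₁ + (c₂.repr v 1) • w₂ := by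
          rw [Submodule.coe_add, Submodule.coe_smul, Submodule.coe_smul,
            Submodule.coe_add, Submodule.coe_smul_of_tower, Submodule.coe_smul_of_tower,
            hw₁_def, hw₂_def]
        rw [← hsm, hs]
      · rintro ⟨m, n, rfl⟩
        constructor
        · exact add_mem (zsmul_mem ((hM w₁).2 hw₁M) m) (zsmul_mem ((hM w₂).2 hw₂M) n)
        · exact add_mem (zsmul_mem hw₁ m) (zsmul_mem hw₂ n)

end
end
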